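/- If (G, D, {D₁,…,Dₙ}) is a minimal decomposition of a closed triangulated surface T, then for every edge e in the boundary of G, the unique vertex in the link of e within G also lies in the boundary of G. -/

import Mathlib

namespace Tri

/-- A (pure 2-dimensional) simplicial complex, given by its set of triangles
(each triangle is a 3-element finset of vertex labels). -/
abbrev Complex := Finset (Finset ℕ)

/-- The vertices of a complex. -/
def vertices (K : Complex) : Finset ℕ := K.biUnion id

/-- The edges of a complex: 2-element subsets of triangles. -/
def edges (K : Complex) : Finset (Finset ℕ) := K.biUnion fun t => t.powersetCard 2

/-- The valence of a vertex: the number of triangles containing it. -/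
def valence (K : Complex) (v : ℕ) : ℕ := (K.filter (fun t => v ∈ t)).card

/-- The maximal vertex-valence of a complex. -/
def mv (K : Complex) : ℕ := (vertices K).sup (valence K)

/-- Euler characteristic V - E + T. -/
def eulerChar (K : Complex) : ℤ :=
  ((vertices K).card : ℤ) - (edges K).card + K.card

/-- Two triangles of `K` both containing `v` and sharing an edge. -/
def adjAt (K : Complex) (v : ℕ) (t₁ t₂ : Finset ℕ) : Prop :=
  t₁ ∈ K ∧ t₂ ∈ K ∧ v ∈ t₁ ∧ v ∈ t₂ ∧ (t₁ ∩ t₂).card = 2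

/-- Two triangles of `K` sharing an edge. -/
def adj (K : Complex) (t₁ t₂ : Finset ℕ) : Prop :=
  t₁ ∈ K ∧ t₂ ∈ K ∧ (t₁ ∩ t₂).card = 2

/-- A triangulation of a connected compact surface, possibly with boundary:
every triangle has 3 vertices, every edge lies in at most two triangles,
the triangles around every vertex are connected via edges through that vertex
(so every vertex link is a path or a circle), and the complex is connected. -/
structure IsSurface (K : Complex) : Prop where
  nonempty : K.Nonempty
  card3 : ∀ t ∈ K, t.card = 3
  edge_le : ∀ e ∈ edges K, (K.filter (fun t => e ⊆ t)).card ≤ 2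
  link_conn : ∀ v, ∀ t₁ ∈ K, ∀ t₂ ∈ K, v ∈ t₁ → v ∈ t₂ →
    Relation.ReflTransGen (adjAt K v) t₁ t₂
  conn : ∀ t₁ ∈ K, ∀ t₂ ∈ K, Relation.ReflTransGen (adj K) t₁ t₂

/-- A triangulation of a closed (connected compact) surface: every edge lies
in exactly two triangles. -/
def IsClosedSurface (K : Complex) : Prop :=
  IsSurface K ∧ ∀ e ∈ edges K, (K.filter (fun t => e ⊆ t)).card = 2

/-- Boundary edges: edges lying in exactly one triangle. -/
def bdryEdges (K : Complex) : Finset (Finset ℕ) :=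
  (edges K).filter (fun e => (K.filter (fun t => e ⊆ t)).card = 1)

/-- Boundary vertices. -/
def bdryVertices (K : Complex) : Finset ℕ := (bdryEdges K).biUnion id

/-- Interior vertices. -/
def intVertices (K : Complex) : Finset ℕ := vertices K \ bdryVertices K

/-- A triangulated disc: a connected compact surface with nonempty boundary and
Euler characteristic 1. -/
def IsDisc (K : Complex) : Prop :=
  IsSurface K ∧ eulerChar K = 1 ∧ (bdryEdges K).Nonempty

/-- Two edges sharing a vertex. -/
def edgeAdj (E : Complex) (e₁ e₂ : Finset ℕ) : Prop :=
  e₁ ∈ E ∧ e₂ ∈ E ∧ (e₁ ∩ e₂).Nonempty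

/-- A set of edges forming a triangulated circle. -/
def IsCircle (E : Complex) : Prop :=
  E.Nonempty ∧ (∀ e ∈ E, e.card = 2) ∧
  (∀ v ∈ E.biUnion id, (E.filter (fun e => v ∈ e)).card = 2) ∧
  ∀ e₁ ∈ E, ∀ e₂ ∈ E, Relation.ReflTransGen (edgeAdj E) e₁ e₂

/-- Simplicial isomorphism (re-labeling). -/
def Iso (K₁ K₂ : Complex) : Prop :=
  ∃ f : ℕ → ℕ, Set.InjOn f (vertices K₁) ∧ K₁.image (Finset.image f) = K₂

/-- The boundary of the tetrahedron. -/
def tetra : Complex := {{1,2,3},{1,2,4},{1,3,4},{2,3,4}}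

/-- The boundary of the octahedron. -/
def octa : Complex := {{1,2,3},{1,2,4},{1,3,5},{1,4,5},{2,3,6},{2,4,6},{3,5,6},{4,5,6}}

/-- The vertices of the link of a vertex. -/
def linkV (K : Complex) (v : ℕ) : Finset ℕ :=
  ((K.filter (fun t => v ∈ t)).biUnion id).erase v

/-- The result of the inverse T-move removing the vertex `v`. -/
def invT (K : Complex) (v : ℕ) : Complex :=
  insert (linkV K v) (K.filter (fun t => v ∉ t))

/-- `K'` is obtained from `K` by an inverse T-move: a 3-valent vertex whose
link does not bound a triangle is removed. -/
def InvTStep (K K' : Complex) : Prop :=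
  ∃ v, valence K v = 3 ∧ linkV K v ∉ K ∧ K' = invT K v

/-- A root: a closed triangulated surface admitting no inverse T-move. -/
def IsRoot (K : Complex) : Prop := IsClosedSurface K ∧ ∀ K', ¬ InvTStep K K'

/-- `R` is a root of `K`: obtained from `K` by inverse T-moves, with no
further inverse T-move applicable. -/
def IsRootOf (R K : Complex) : Prop :=
  Relation.ReflTransGen InvTStep K R ∧ ∀ R', ¬ InvTStep R R'

/-- The directed edges of an ordered triangle. -/
def dedges (p : ℕ × ℕ × ℕ) : Finset (ℕ × ℕ) := {(p.1, p.2.1), (p.2.1, p.2.2), (p.2.2, p.1)}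

/-- Orientability: a coherent choice of cyclic orders on the triangles,
i.e. no directed edge is shared by two distinct triangles. -/
def Orientable (K : Complex) : Prop :=
  ∃ o : Finset ℕ → ℕ × ℕ × ℕ,
    (∀ t ∈ K, ({(o t).1, (o t).2.1, (o t).2.2} : Finset ℕ) = t) ∧
    ∀ t₁ ∈ K, ∀ t₂ ∈ K, t₁ ≠ t₂ → ∀ p ∈ dedges (o t₁), p ∉ dedges (o t₂)

/-- Two closed triangulated surfaces triangulate the same surface iff they
have the same Euler characteristic and the same orientability. -/
def SameSurface (K₁ K₂ : Complex) : Prop :=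
  eulerChar K₁ = eulerChar K₂ ∧ (Orientable K₁ ↔ Orientable K₂)

/-- The intersection of two subcomplexes is a triangulated circle or empty. -/
def CircleInter (A B : Complex) : Prop :=
  (IsCircle (edges A ∩ edges B) ∨ edges A ∩ edges B = ∅) ∧
  vertices A ∩ vertices B = (edges A ∩ edges B).biUnion id

/-- A decomposition `(G, D, Ds)` of a closed triangulated surface `K`. -/
structure IsDecomp (K G D : Complex) (Ds : Finset Complex) : Prop where
  closed : IsClosedSurface K
  subG : G ⊆ K
  subD : D ⊆ K
  subDs : ∀ Di ∈ Ds, Di ⊆ K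
  surfG : IsSurface G
  discD : IsDisc D
  discDs : ∀ Di ∈ Ds, IsDisc Di
  maxv : ∃ v ∈ intVertices D, valence K v = mv K
  cover : G ∪ D ∪ Ds.sup id = K
  disjGD : Disjoint G D
  disjGDs : ∀ Di ∈ Ds, Disjoint G Di
  disjDDs : ∀ Di ∈ Ds, Disjoint D Di
  disjDsDs : ∀ Di ∈ Ds, ∀ Dj ∈ Ds, Di ≠ Dj → Disjoint Di Dj
  interGD : CircleInter G D
  interGDs : ∀ Di ∈ Ds, CircleInter G Di
  interDDs : ∀ Di ∈ Ds, CircleInter D Di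
  interDsDs : ∀ Di ∈ Ds, ∀ Dj ∈ Ds, Di ≠ Dj → CircleInter Di Dj

/-- A minimal decomposition: the genus-surface has the fewest triangles. -/
def IsMinDecomp (K G D : Complex) (Ds : Finset Complex) : Prop :=
  IsDecomp K G D Ds ∧ ∀ G' D' Ds', IsDecomp K G' D' Ds' → G.card ≤ G'.card

lemma mem_vertices {K : Complex} {v : ℕ} : v ∈ vertices K ↔ ∃ t ∈ K, v ∈ t := by
  simp [vertices]

lemma mem_edges {K : Complex} {f : Finset ℕ} :
    f ∈ edges K ↔ ∃ t ∈ K, f ⊆ t ∧ f.card = 2 := by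
  simp [edges, Finset.mem_powersetCard]

lemma vertices_mono {A B : Complex} (h : A ⊆ B) : vertices A ⊆ vertices B := by
  intro v hv; rw [mem_vertices] at *; obtain ⟨t, ht, hvt⟩ := hv; exact ⟨t, h ht, hvt⟩

lemma edges_mono {A B : Complex} (h : A ⊆ B) : edges A ⊆ edges B := by
  intro f hf; rw [mem_edges] at *; obtain ⟨t, ht, h1, h2⟩ := hf; exact ⟨t, h ht, h1, h2⟩

lemma even_card_of_involution {α : Type*} [DecidableEq α] (s : Finset α)
    (f : α → α) (hf : ∀ x ∈ s, f x ∈ s ∧ f x ≠ x ∧ f (f x) = x) : Even s.card := by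
  induction s using Finset.strongInduction with
  | _ s ih =>
    rcases s.eq_empty_or_nonempty with rfl | ⟨x, hx⟩
    · simp
    · obtain ⟨hfx1, hfx2, hfx3⟩ := hf x hx
      set s' := (s.erase x).erase (f x) with hs'
      have hsub : s' ⊂ s := by
        refine Finset.ssubset_of_subset_of_ssubset ?_ (Finset.erase_ssubset hx)
        exact Finset.erase_subset _ _
      have hclosed : ∀ y ∈ s', f y ∈ s' ∧ f y ≠ y ∧ f (f y) = y := by
        intro y hy
        have hys : y ∈ s := Finset.mem_of_mem_erase (Finset.mem_of_mem_erase hy)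
        obtain ⟨h1, h2, h3⟩ := hf y hys
        have hyx : y ≠ x := by
          intro h; subst h
          exact (Finset.notMem_erase _ _) (Finset.mem_of_mem_erase hy)
        have hyfx : y ≠ f x := by
          intro h; subst h; exact (Finset.notMem_erase _ _) hy
        refine ⟨?_, h2, h3⟩
        rw [hs']
        refine Finset.mem_erase.2 ⟨?_, Finset.mem_erase.2 ⟨?_, h1⟩⟩
        · intro h; apply hyx; rw [← h3, h, hfx3]
        · intro h; apply hyfx; rw [← h3, h]
      have hcard : s.card = s'.card + 2 := by
        have h1 : f x ∈ s.erase x := Finset.mem_erase.2 ⟨hfx2, hfx1⟩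
        have h2 : s'.card = (s.erase x).card - 1 := Finset.card_erase_of_mem h1
        have h3 : (s.erase x).card = s.card - 1 := Finset.card_erase_of_mem hx
        have h4 : 1 ≤ (s.erase x).card := Finset.card_pos.2 ⟨f x, h1⟩
        have h5 : 1 ≤ s.card := Finset.card_pos.2 ⟨x, hx⟩
        omega
      rw [hcard]
      exact (ih s' hsub hclosed).add even_two

lemma chain_reroute {α : Type*} {R R' : α → α → Prop} (t : α)
    (hRR' : ∀ x y, R x y → x ≠ t → y ≠ t → R' x y)
    (hnb : ∀ x y, R x t → R t y → x ≠ t → y ≠ t → Relation.ReflTransGen R' x y)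
    {a b : α} (hab : Relation.ReflTransGen R a b) (ha : a ≠ t) (hb : b ≠ t) :
    Relation.ReflTransGen R' a b := by
  have key : ∀ x, Relation.ReflTransGen R a x →
      (x = t → ∀ y, R t y → y ≠ t → Relation.ReflTransGen R' a y) ∧
      (x ≠ t → Relation.ReflTransGen R' a x) := by
    intro x hx
    induction hx with
    | refl => exact ⟨fun h => absurd h ha, fun _ => Relation.ReflTransGen.refl⟩
    | @tail c b' hac hcb ih =>
      by_cases hct : c = t
      · subst hct
        constructor
        · intro hbt y hy hynt
          exact ih.1 rfl y hy hynt
        · intro hbnt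
          exact ih.1 rfl b' hcb hbnt
      · constructor
        · intro hbt y hy hynt
          subst hbt
          exact (ih.2 hct).trans (hnb c y hcb hy hct hynt)
        · intro hbnt
          exact (ih.2 hct).tail (hRR' c b' hcb hct hbnt)
  exact (key b hab).2 hb

open Classical in
lemma degree_two_erase_conn {α : Type*} [DecidableEq α] (F : Finset α) (R : α → α → Prop)
    (hsym : ∀ x y, R x y → R y x)
    (hsupp : ∀ x y, R x y → x ∈ F ∧ y ∈ F ∧ x ≠ y)
    (hdeg : ∀ x ∈ F, (F.filter (fun y => R x y)).card = 2)
    (t sa sb : α) (ha : R t sa) (hb : R t sb) (hab : sa ≠ sb) :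
    Relation.ReflTransGen (fun x y => R x y ∧ x ≠ t ∧ y ≠ t) sa sb := by
  by_contra hcon
  set R' : α → α → Prop := fun x y => R x y ∧ x ≠ t ∧ y ≠ t with hR'
  have htF : t ∈ F := (hsupp t sa ha).1
  have hsaF : sa ∈ F := (hsupp t sa ha).2.1
  have hsat : sa ≠ t := fun h => (hsupp t sa ha).2.2 h.symm
  have hsbt : sb ≠ t := fun h => (hsupp t sb hb).2.2 h.symm
  set S : Finset α := F.filter (fun x => x ≠ t ∧ Relation.ReflTransGen R' sa x) with hS
  have hsaS : sa ∈ S := Finset.mem_filter.2 ⟨hsaF, hsat, Relation.ReflTransGen.refl⟩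
  have hsbS : sb ∉ S := by
    intro h
    exact hcon (Finset.mem_filter.1 h).2.2
  have hnbt : F.filter (fun y => R t y) = {sa, sb} := by
    apply Finset.eq_of_superset_of_card_ge
    · intro x hx
      rcases Finset.mem_insert.1 hx with rfl | hx
      · exact Finset.mem_filter.2 ⟨hsaF, ha⟩
      · rw [Finset.mem_singleton] at hx; subst hx
        exact Finset.mem_filter.2 ⟨(hsupp _ _ hb).2.1, hb⟩
    · rw [hdeg t htF, Finset.card_insert_of_notMem (by simpa using hab), Finset.card_singleton]
  set P : Finset (α × α) :=
    S.biUnion (fun x => (F.filter (fun y => R x y)).image (fun y => (x, y))) with hP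
  have memP : ∀ p : α × α, p ∈ P ↔ p.1 ∈ S ∧ p.2 ∈ F ∧ R p.1 p.2 := by
    intro p
    simp only [hP, Finset.mem_biUnion, Finset.mem_image, Finset.mem_filter]
    constructor
    · rintro ⟨x, hx, y, ⟨hyF, hRxy⟩, rfl⟩
      exact ⟨hx, hyF, hRxy⟩
    · rintro ⟨h1, h2, h3⟩
      exact ⟨p.1, h1, p.2, ⟨h2, h3⟩, rfl⟩
  have hcardP : P.card = 2 * S.card := by
    rw [hP, Finset.card_biUnion]
    · rw [Finset.sum_congr rfl (fun x hx => ?_), Finset.sum_const, smul_eq_mul, mul_comm]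
      rw [Finset.card_image_of_injective _ (fun y z h => by simpa using congrArg Prod.snd h),
        hdeg x (Finset.mem_filter.1 hx).1]
    · intro x hx y hy hxy
      simp only [Finset.disjoint_left, Finset.mem_image]
      rintro p ⟨u, hu, rfl⟩ ⟨v, hv, hpv⟩
      exact hxy (congrArg Prod.fst hpv).symm
  have hsplit : (P.filter (fun p => p.2 ≠ t)).card + (P.filter (fun p => p.2 = t)).card
      = P.card := by
    rw [add_comm]
    exact Finset.card_filter_add_card_filter_not (fun p : α × α => p.2 = t)
  have hP2 : P.filter (fun p => p.2 = t) = {(sa, t)} := by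
    apply Finset.ext
    rintro ⟨x, y⟩
    simp only [Finset.mem_filter, Finset.mem_singleton, memP, Prod.mk.injEq]
    constructor
    · rintro ⟨⟨hxS, hyF, hRxy⟩, hyt⟩
      refine ⟨?_, hyt⟩
      rw [hyt] at hRxy
      have hxmem : x ∈ F.filter (fun z => R t z) :=
        Finset.mem_filter.2 ⟨(Finset.mem_filter.1 hxS).1, hsym _ _ hRxy⟩
      rw [hnbt] at hxmem
      rcases Finset.mem_insert.1 hxmem with h | h
      · exact h
      · rw [Finset.mem_singleton] at h; rw [h] at hxS
        exact absurd hxS hsbS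
    · rintro ⟨rfl, rfl⟩
      exact ⟨⟨hsaS, htF, hsym _ _ ha⟩, rfl⟩
  have hP1even : Even (P.filter (fun p => p.2 ≠ t)).card := by
    apply even_card_of_involution _ (fun p => (p.2, p.1))
    rintro ⟨x, y⟩ hp
    obtain ⟨hP', hyt⟩ := Finset.mem_filter.1 hp
    obtain ⟨hxS, hyF, hRxy⟩ := (memP _).1 hP'
    obtain ⟨hxF, hxt, hpath⟩ := Finset.mem_filter.1 hxS
    have hyS : y ∈ S := Finset.mem_filter.2 ⟨hyF, hyt, hpath.tail ⟨hRxy, hxt, hyt⟩⟩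
    have hxy : x ≠ y := (hsupp x y hRxy).2.2
    refine ⟨Finset.mem_filter.2 ⟨(memP _).2 ⟨hyS, hxF, hsym _ _ hRxy⟩, hxt⟩, ?_, rfl⟩
    simp [Prod.ext_iff]
    intro h
    exact fun h2 => hxy h.symm
  rw [hP2, Finset.card_singleton, hcardP] at hsplit
  obtain ⟨k, hk⟩ := hP1even
  omega


lemma card_two_other {A : Complex} {f t1 : Finset ℕ}
    (h2 : (A.filter (fun s => f ⊆ s)).card = 2) (ht1 : t1 ∈ A) (hf : f ⊆ t1) :
    ∃ t2, t2 ∈ A ∧ f ⊆ t2 ∧ t2 ≠ t1 ∧ ∀ s ∈ A, f ⊆ s → s = t1 ∨ s = t2 := by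
  obtain ⟨x, y, hxy, hset⟩ := Finset.card_eq_two.1 h2
  have key : ∀ s, (s ∈ A ∧ f ⊆ s) ↔ (s = x ∨ s = y) := by
    intro s
    constructor
    · intro hs
      have : s ∈ A.filter (fun s => f ⊆ s) := Finset.mem_filter.2 hs
      rw [hset] at this
      simpa using this
    · intro hs
      have : s ∈ A.filter (fun s => f ⊆ s) := by
        rw [hset]; simpa using hs
      exact ⟨(Finset.mem_filter.1 this).1, (Finset.mem_filter.1 this).2⟩
  rcases (key t1).1 ⟨ht1, hf⟩ with rfl | rfl
  · exact ⟨y, ((key y).2 (Or.inr rfl)).1, ((key y).2 (Or.inr rfl)).2, hxy.symm,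
      fun s hs hfs => (key s).1 ⟨hs, hfs⟩⟩
  · exact ⟨x, ((key x).2 (Or.inl rfl)).1, ((key x).2 (Or.inl rfl)).2, hxy,
      fun s hs hfs => ((key s).1 ⟨hs, hfs⟩).symm⟩

lemma two_triangles {K : Complex} (hK : IsClosedSurface K) {f t1 : Finset ℕ}
    (ht1 : t1 ∈ K) (hf1 : f ⊆ t1) (hfc : f.card = 2) :
    ∃ t2, t2 ∈ K ∧ f ⊆ t2 ∧ t2 ≠ t1 ∧ ∀ s ∈ K, f ⊆ s → s = t1 ∨ s = t2 :=
  card_two_other (hK.2 f (mem_edges.2 ⟨t1, ht1, hf1, hfc⟩)) ht1 hf1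

lemma bdry_unique {G : Complex} {e t : Finset ℕ} (he : e ∈ bdryEdges G)
    (ht : t ∈ G) (het : e ⊆ t) : ∀ s ∈ G, e ⊆ s → s = t := by
  intro s hs hes
  have h1 := (Finset.mem_filter.1 he).2
  obtain ⟨x, hx⟩ := Finset.card_eq_one.1 h1
  have hsx : s ∈ G.filter (fun u => e ⊆ u) := Finset.mem_filter.2 ⟨hs, hes⟩
  have htx : t ∈ G.filter (fun u => e ⊆ u) := Finset.mem_filter.2 ⟨ht, het⟩
  rw [hx, Finset.mem_singleton] at hsx htx
  rw [hsx, htx]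

lemma subsets_of_triangle {a b w : ℕ} {f : Finset ℕ} (hab : a ≠ b) (hwa : w ≠ a)
    (hwb : w ≠ b) (hf : f ⊆ {a, b, w}) (hc : f.card = 2) :
    f = {a, b} ∨ f = {a, w} ∨ f = {b, w} := by
  obtain ⟨x, y, hxy, rfl⟩ := Finset.card_eq_two.1 hc
  have hx : x = a ∨ x = b ∨ x = w := by
    have := hf (Finset.mem_insert_self x {y}); simpa using this
  have hy : y = a ∨ y = b ∨ y = w := by
    have := hf (by simp : y ∈ ({x, y} : Finset ℕ)); simpa using this
  rcases hx with rfl | rfl | rfl <;> rcases hy with rfl | rfl | rfl <;>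
    simp_all [Finset.pair_comm]

lemma chain_key {α : Type*} {R R' : α → α → Prop} (t : α)
    (hRR' : ∀ x y, R x y → x ≠ t → y ≠ t → R' x y)
    (hnb : ∀ x y, R x t → R t y → x ≠ t → y ≠ t → Relation.ReflTransGen R' x y)
    {a : α} (ha : a ≠ t) :
    ∀ x, Relation.ReflTransGen R a x →
      (x = t → ∀ y, R t y → y ≠ t → Relation.ReflTransGen R' a y) ∧
      (x ≠ t → Relation.ReflTransGen R' a x) := by
  intro x hx
  induction hx with
  | refl => exact ⟨fun h => absurd h ha, fun _ => Relation.ReflTransGen.refl⟩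
  | @tail c b' hac hcb ih =>
    by_cases hct : c = t
    · subst hct
      exact ⟨fun hbt y hy hynt => ih.1 rfl y hy hynt, fun hbnt => ih.1 rfl b' hcb hbnt⟩
    · constructor
      · intro hbt y hy hynt
        subst hbt
        exact (ih.2 hct).trans (hnb c y hcb hy hct hynt)
      · intro hbnt
        exact (ih.2 hct).tail (hRR' c b' hcb hct hbnt)

lemma two_mem_other {α : Type*} [DecidableEq α] {A : Finset α} {p : α → Prop} [DecidablePred p]
    (h2 : (A.filter p).card = 2) {x : α} (hx : x ∈ A) (hpx : p x) :
    ∃ y, y ∈ A ∧ p y ∧ y ≠ x ∧ ∀ z ∈ A, p z → z = x ∨ z = y := by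
  obtain ⟨u, v, huv, hset⟩ := Finset.card_eq_two.1 h2
  have key : ∀ s, (s ∈ A ∧ p s) ↔ (s = u ∨ s = v) := by
    intro s
    constructor
    · intro hs
      have : s ∈ A.filter p := Finset.mem_filter.2 hs
      rw [hset] at this
      simpa using this
    · intro hs
      have : s ∈ A.filter p := by rw [hset]; simpa using hs
      exact ⟨(Finset.mem_filter.1 this).1, (Finset.mem_filter.1 this).2⟩
  rcases (key x).1 ⟨hx, hpx⟩ with rfl | rfl
  · exact ⟨v, ((key v).2 (Or.inr rfl)).1, ((key v).2 (Or.inr rfl)).2, huv.symm,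
      fun s hs hps => (key s).1 ⟨hs, hps⟩⟩
  · exact ⟨u, ((key u).2 (Or.inl rfl)).1, ((key u).2 (Or.inl rfl)).2, huv,
      fun s hs hps => ((key s).1 ⟨hs, hps⟩).symm⟩

/-- The context for the triangle-transfer construction. -/
structure Setup (K G C : Complex) (e t t' : Finset ℕ) (a b w : ℕ) : Prop where
  closedK : IsClosedSurface K
  surfG : IsSurface G
  subG : G ⊆ K
  subC : C ⊆ K
  discC : IsDisc C
  disjGC : Disjoint G C
  interGC : CircleInter G C
  htG : t ∈ G
  ht'C : t' ∈ C
  hbdry : e ∈ bdryEdges G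
  hea : e = {a, b}
  hab : a ≠ b
  htw : t = {a, b, w}
  hwa : w ≠ a
  hwb : w ≠ b
  het' : e ⊆ t'
  hwint : w ∉ bdryVertices G

namespace Setup

variable {K G C : Complex} {e t t' : Finset ℕ} {a b w : ℕ}
variable (S : Setup K G C e t t' a b w)
include S

lemma het : e ⊆ t := by
  rw [S.hea, S.htw]; intro x hx; simp at hx ⊢; tauto

lemma ecard : e.card = 2 := by
  rw [S.hea, Finset.card_insert_of_notMem (by simpa using S.hab), Finset.card_singleton]

lemma tcard : t.card = 3 := S.surfG.card3 t S.htG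

lemma wt : w ∈ t := by rw [S.htw]; simp

lemma we : w ∉ e := by rw [S.hea]; simp [S.hwa, S.hwb]

lemma at_ : a ∈ t := by rw [S.htw]; simp
lemma bt : b ∈ t := by rw [S.htw]; simp
lemma ae : a ∈ e := by rw [S.hea]; simp
lemma be : b ∈ e := by rw [S.hea]; simp

lemma htK : t ∈ K := S.subG S.htG
lemma ht'K : t' ∈ K := S.subC S.ht'C

lemma tnot : t ∉ C := Finset.disjoint_left.1 S.disjGC S.htG
lemma t'not : t' ∉ G := fun h => Finset.disjoint_left.1 S.disjGC h S.ht'C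

lemma tne : t ≠ t' := fun h => S.tnot (h ▸ S.ht'C)

lemma uniqueG : ∀ s ∈ G, e ⊆ s → s = t := bdry_unique S.hbdry S.htG S.het

lemma uniqueK : ∀ s ∈ K, e ⊆ s → s = t ∨ s = t' := by
  obtain ⟨t2, ht2K, het2, ht2t, huniq⟩ := two_triangles S.closedK S.htK S.het S.ecard
  have ht2 : t2 = t' := by
    rcases huniq t' S.ht'K S.het' with h | h
    · exact absurd h.symm S.tne
    · exact h.symm
  intro s hs hes
  rcases huniq s hs hes with h | h
  · exact Or.inl h
  · exact Or.inr (ht2 ▸ h)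

lemma wG : w ∈ vertices G := mem_vertices.2 ⟨t, S.htG, S.wt⟩

lemma eG : e ∈ edges G := mem_edges.2 ⟨t, S.htG, S.het, S.ecard⟩

lemma eC : e ∈ edges C := mem_edges.2 ⟨t', S.ht'C, S.het', S.ecard⟩

/-- Any edge shared between `G` and a subcomplex disjoint from `G` is a
boundary edge of `G`. -/
lemma shared_bdry {B : Complex} (hBK : B ⊆ K) (hdisj : Disjoint G B) :
    ∀ f ∈ edges G ∩ edges B, f ∈ bdryEdges G := by
  intro f hf
  obtain ⟨hfG, hfB⟩ := Finset.mem_inter.1 hf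
  obtain ⟨s, hsG, hfs, hfc⟩ := mem_edges.1 hfG
  obtain ⟨s', hs'B, hfs', _⟩ := mem_edges.1 hfB
  have hss' : s ≠ s' := fun h => Finset.disjoint_left.1 hdisj hsG (h ▸ hs'B)
  obtain ⟨t2, ht2K, hft2, ht2s, huniq⟩ := two_triangles S.closedK (S.subG hsG) hfs hfc
  have ht2 : t2 = s' := by
    rcases huniq s' (hBK hs'B) hfs' with h | h
    · exact absurd h hss'.symm
    · exact h.symm
  subst ht2
  refine Finset.mem_filter.2 ⟨hfG, ?_⟩
  rw [Finset.card_eq_one]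
  refine ⟨s, ?_⟩
  apply Finset.ext
  intro u
  simp only [Finset.mem_filter, Finset.mem_singleton]
  constructor
  · rintro ⟨huG, hfu⟩
    rcases huniq u (S.subG huG) hfu with h | h
    · exact h
    · exact absurd (h ▸ huG) (fun hh => Finset.disjoint_left.1 hdisj hh hs'B)
  · rintro rfl; exact ⟨hsG, hfs⟩

lemma w_notin_shared {B : Complex} (hBK : B ⊆ K) (hdisj : Disjoint G B)
    (hcirc : CircleInter G B) : w ∉ vertices B := by
  intro hwB
  have : w ∈ vertices G ∩ vertices B := Finset.mem_inter.2 ⟨S.wG, hwB⟩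
  rw [hcirc.2] at this
  obtain ⟨f, hf, hwf⟩ := Finset.mem_biUnion.1 this
  exact S.hwint (Finset.mem_biUnion.2 ⟨f, S.shared_bdry hBK hdisj f hf, hwf⟩)

lemma wC : w ∉ vertices C := S.w_notin_shared S.subC S.disjGC S.interGC

/-- Any 2-element subset of `t` other than `e` lies in exactly two triangles
of `G`, and every triangle of `K` containing it lies in `G`. -/
lemma intEdge {f : Finset ℕ} (hft : f ⊆ t) (hfc : f.card = 2) (hwf : w ∈ f) :
    (G.filter (fun s => f ⊆ s)).card = 2 ∧ (∀ s ∈ K, f ⊆ s → s ∈ G) := by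
  have hfG : f ∈ edges G := mem_edges.2 ⟨t, S.htG, hft, hfc⟩
  have hfnb : f ∉ bdryEdges G := by
    intro h
    exact S.hwint (Finset.mem_biUnion.2 ⟨f, h, hwf⟩)
  have hle := S.surfG.edge_le f hfG
  have hge : 1 ≤ (G.filter (fun s => f ⊆ s)).card :=
    Finset.card_pos.2 ⟨t, Finset.mem_filter.2 ⟨S.htG, hft⟩⟩
  have h2 : (G.filter (fun s => f ⊆ s)).card = 2 := by
    rcases Nat.lt_or_ge (G.filter (fun s => f ⊆ s)).card 2 with h | h
    · exfalso
      apply hfnb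
      refine Finset.mem_filter.2 ⟨hfG, ?_⟩
      omega
    · omega
  refine ⟨h2, ?_⟩
  have hsub : G.filter (fun s => f ⊆ s) ⊆ K.filter (fun s => f ⊆ s) := by
    intro u hu
    exact Finset.mem_filter.2 ⟨S.subG (Finset.mem_filter.1 hu).1, (Finset.mem_filter.1 hu).2⟩
  have hKcard : (K.filter (fun s => f ⊆ s)).card = 2 :=
    S.closedK.2 f (mem_edges.2 ⟨t, S.htK, hft, hfc⟩)
  have heq : G.filter (fun s => f ⊆ s) = K.filter (fun s => f ⊆ s) :=
    Finset.eq_of_subset_of_card_le hsub (by omega)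
  intro s hs hfs
  have : s ∈ K.filter (fun u => f ⊆ u) := Finset.mem_filter.2 ⟨hs, hfs⟩
  rw [← heq] at this
  exact (Finset.mem_filter.1 this).1

lemma other {f : Finset ℕ} (hft : f ⊆ t) (hfc : f.card = 2) (hwf : w ∈ f) :
    ∃ s, s ∈ G ∧ f ⊆ s ∧ s ≠ t ∧ ∀ u ∈ G, f ⊆ u → u = t ∨ u = s :=
  card_two_other (S.intEdge hft hfc hwf).1 S.htG hft

lemma subt {f : Finset ℕ} (hft : f ⊆ t) (hfc : f.card = 2) :
    f = e ∨ f = {a, w} ∨ f = {b, w} := by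
  rw [S.hea]
  exact subsets_of_triangle S.hab S.hwa S.hwb (S.htw ▸ hft) hfc

lemma w_mem_of_ne {f : Finset ℕ} (hft : f ⊆ t) (hfc : f.card = 2) (hne : f ≠ e) :
    w ∈ f := by
  rcases S.subt hft hfc with h | h | h
  · exact absurd h hne
  · rw [h]; simp
  · rw [h]; simp

lemma haw : ({a, w} : Finset ℕ) ⊆ t ∧ ({a, w} : Finset ℕ).card = 2 ∧ w ∈ ({a, w} : Finset ℕ) := by
  refine ⟨?_, ?_, by simp⟩
  · rw [S.htw]; intro x hx; simp at hx ⊢; tauto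
  · rw [Finset.card_insert_of_notMem (by simpa using (Ne.symm S.hwa)), Finset.card_singleton]

lemma hbw : ({b, w} : Finset ℕ) ⊆ t ∧ ({b, w} : Finset ℕ).card = 2 ∧ w ∈ ({b, w} : Finset ℕ) := by
  refine ⟨?_, ?_, by simp⟩
  · rw [S.htw]; intro x hx; simp at hx ⊢; tauto
  · rw [Finset.card_insert_of_notMem (by simpa using (Ne.symm S.hwb)), Finset.card_singleton]

/-- The two triangles of `G` adjacent to `t` across the interior edges. -/
noncomputable def sa : Finset ℕ :=
  (S.other S.haw.1 S.haw.2.1 S.haw.2.2).choose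

noncomputable def sb : Finset ℕ :=
  (S.other S.hbw.1 S.hbw.2.1 S.hbw.2.2).choose

lemma sa_spec : S.sa ∈ G ∧ {a, w} ⊆ S.sa ∧ S.sa ≠ t ∧
    ∀ u ∈ G, {a, w} ⊆ u → u = t ∨ u = S.sa :=
  (S.other S.haw.1 S.haw.2.1 S.haw.2.2).choose_spec

lemma sb_spec : S.sb ∈ G ∧ {b, w} ⊆ S.sb ∧ S.sb ≠ t ∧
    ∀ u ∈ G, {b, w} ⊆ u → u = t ∨ u = S.sb :=
  (S.other S.hbw.1 S.hbw.2.1 S.hbw.2.2).choose_spec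

lemma sa_ne_sb : S.sa ≠ S.sb := by
  intro h
  have h1 : t ⊆ S.sa := by
    intro x hx
    rw [S.htw] at hx
    simp at hx
    rcases hx with rfl | rfl | rfl
    · exact S.sa_spec.2.1 (by simp)
    · rw [h]; exact S.sb_spec.2.1 (by simp)
    · exact S.sa_spec.2.1 (by simp)
  have h2 : t = S.sa := Finset.eq_of_subset_of_card_le h1 (by
    have h3 := S.surfG.card3 _ S.sa_spec.1
    have h4 := S.tcard
    omega)
  exact S.sa_spec.2.2.1 h2.symm

lemma vertices_erase : vertices (G.erase t) = vertices G := by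
  apply Finset.Subset.antisymm (vertices_mono (Finset.erase_subset _ _))
  intro v hv
  obtain ⟨s, hsG, hvs⟩ := mem_vertices.1 hv
  by_cases hst : s = t
  · subst hst
    rw [S.htw] at hvs
    simp at hvs
    rcases hvs with rfl | rfl | rfl
    · exact mem_vertices.2 ⟨S.sa, Finset.mem_erase.2 ⟨S.sa_spec.2.2.1, S.sa_spec.1⟩,
        S.sa_spec.2.1 (by simp)⟩
    · exact mem_vertices.2 ⟨S.sb, Finset.mem_erase.2 ⟨S.sb_spec.2.2.1, S.sb_spec.1⟩,
        S.sb_spec.2.1 (by simp)⟩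
    · exact mem_vertices.2 ⟨S.sa, Finset.mem_erase.2 ⟨S.sa_spec.2.2.1, S.sa_spec.1⟩,
        S.sa_spec.2.1 (by simp)⟩
  · exact mem_vertices.2 ⟨s, Finset.mem_erase.2 ⟨hst, hsG⟩, hvs⟩

lemma edges_erase : edges (G.erase t) = (edges G).erase e := by
  apply Finset.Subset.antisymm
  · intro f hf
    obtain ⟨s, hs, hfs, hfc⟩ := mem_edges.1 hf
    obtain ⟨hst, hsG⟩ := Finset.mem_erase.1 hs
    refine Finset.mem_erase.2 ⟨?_, mem_edges.2 ⟨s, hsG, hfs, hfc⟩⟩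
    rintro rfl
    exact hst (S.uniqueG s hsG hfs)
  · intro f hf
    obtain ⟨hfe, hfG⟩ := Finset.mem_erase.1 hf
    obtain ⟨s, hsG, hfs, hfc⟩ := mem_edges.1 hfG
    by_cases hst : s = t
    · subst hst
      have hwf : w ∈ f := S.w_mem_of_ne hfs hfc hfe
      obtain ⟨s', hs'G, hfs', hs't, _⟩ := S.other hfs hfc hwf
      exact mem_edges.2 ⟨s', Finset.mem_erase.2 ⟨hs't, hs'G⟩, hfs', hfc⟩
    · exact mem_edges.2 ⟨s, Finset.mem_erase.2 ⟨hst, hsG⟩, hfs, hfc⟩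

lemma vertices_insert : vertices (insert t C) = insert w (vertices C) := by
  apply Finset.ext
  intro v
  rw [mem_vertices, Finset.mem_insert, mem_vertices]
  constructor
  · rintro ⟨s, hs, hvs⟩
    rcases Finset.mem_insert.1 hs with rfl | hsC
    · rw [S.htw] at hvs
      simp at hvs
      rcases hvs with rfl | rfl | rfl
      · exact Or.inr ⟨t', S.ht'C, S.het' S.ae⟩
      · exact Or.inr ⟨t', S.ht'C, S.het' S.be⟩
      · exact Or.inl rfl
    · exact Or.inr ⟨s, hsC, hvs⟩
  · rintro (rfl | ⟨s, hsC, hvs⟩)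
    · exact ⟨t, Finset.mem_insert_self _ _, S.wt⟩
    · exact ⟨s, Finset.mem_insert_of_mem hsC, hvs⟩

lemma aw_notin_edgesC : ({a, w} : Finset ℕ) ∉ edges C ∧ ({b, w} : Finset ℕ) ∉ edges C := by
  constructor <;>
  · intro h
    obtain ⟨s, hsC, hfs, _⟩ := mem_edges.1 h
    exact S.wC (mem_vertices.2 ⟨s, hsC, hfs (by simp)⟩)

lemma powersetCard_t : t.powersetCard 2 = {e, {a, w}, {b, w}} := by
  apply Finset.ext
  intro f
  rw [Finset.mem_powersetCard]
  constructor
  · rintro ⟨hft, hfc⟩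
    have := S.subt hft hfc
    simpa using this
  · intro hf
    simp at hf
    rcases hf with rfl | rfl | rfl
    · exact ⟨S.het, S.ecard⟩
    · exact ⟨S.haw.1, S.haw.2.1⟩
    · exact ⟨S.hbw.1, S.hbw.2.1⟩

lemma edges_insert : edges (insert t C) = insert {a, w} (insert {b, w} (edges C)) := by
  apply Finset.ext
  intro f
  rw [mem_edges]
  constructor
  · rintro ⟨s, hs, hfs, hfc⟩
    rcases Finset.mem_insert.1 hs with rfl | hsC
    · rcases S.subt hfs hfc with rfl | rfl | rfl
      · exact Finset.mem_insert_of_mem (Finset.mem_insert_of_mem S.eC)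
      · exact Finset.mem_insert_self _ _
      · exact Finset.mem_insert_of_mem (Finset.mem_insert_self _ _)
    · exact Finset.mem_insert_of_mem (Finset.mem_insert_of_mem
        (mem_edges.2 ⟨s, hsC, hfs, hfc⟩))
  · intro hf
    rcases Finset.mem_insert.1 hf with rfl | hf
    · exact ⟨t, Finset.mem_insert_self _ _, S.haw.1, S.haw.2.1⟩
    rcases Finset.mem_insert.1 hf with rfl | hf
    · exact ⟨t, Finset.mem_insert_self _ _, S.hbw.1, S.hbw.2.1⟩
    · obtain ⟨s, hsC, hfs, hfc⟩ := mem_edges.1 hf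
      exact ⟨s, Finset.mem_insert_of_mem hsC, hfs, hfc⟩

lemma w_edge_two {f : Finset ℕ} (hfG : f ∈ edges G) (hwf : w ∈ f) :
    (G.filter (fun s => f ⊆ s)).card = 2 ∧ (∀ s ∈ K, f ⊆ s → s ∈ G) := by
  obtain ⟨x0, hx0G, hfx0, hfc⟩ := mem_edges.1 hfG
  have hfnb : f ∉ bdryEdges G := by
    intro h
    exact S.hwint (Finset.mem_biUnion.2 ⟨f, h, hwf⟩)
  have hle := S.surfG.edge_le f hfG
  have hge : 1 ≤ (G.filter (fun s => f ⊆ s)).card :=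
    Finset.card_pos.2 ⟨x0, Finset.mem_filter.2 ⟨hx0G, hfx0⟩⟩
  have h2 : (G.filter (fun s => f ⊆ s)).card = 2 := by
    rcases Nat.lt_or_ge (G.filter (fun s => f ⊆ s)).card 2 with h | h
    · exact absurd (Finset.mem_filter.2 ⟨hfG, by omega⟩) hfnb
    · omega
  refine ⟨h2, ?_⟩
  have hsub : G.filter (fun s => f ⊆ s) ⊆ K.filter (fun s => f ⊆ s) := fun u hu =>
    Finset.mem_filter.2 ⟨S.subG (Finset.mem_filter.1 hu).1, (Finset.mem_filter.1 hu).2⟩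
  have hKcard : (K.filter (fun s => f ⊆ s)).card = 2 :=
    S.closedK.2 f (mem_edges.2 ⟨x0, S.subG hx0G, hfx0, hfc⟩)
  have heq : G.filter (fun s => f ⊆ s) = K.filter (fun s => f ⊆ s) :=
    Finset.eq_of_subset_of_card_le hsub (by omega)
  intro s hs hfs
  have : s ∈ K.filter (fun u => f ⊆ u) := Finset.mem_filter.2 ⟨hs, hfs⟩
  rw [← heq] at this
  exact (Finset.mem_filter.1 this).1

omit S in
lemma inter_card_le_two {s₁ s₂ : Finset ℕ} (h1 : s₁.card = 3) (h2 : s₂.card = 3)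
    (hne : s₁ ≠ s₂) : (s₁ ∩ s₂).card ≤ 2 := by
  by_contra h
  have hle : (s₁ ∩ s₂).card ≤ 3 := h1 ▸ Finset.card_le_card (Finset.inter_subset_left)
  have h3 : (s₁ ∩ s₂).card = 3 := by omega
  have he1 : s₁ ∩ s₂ = s₁ :=
    Finset.eq_of_subset_of_card_le Finset.inter_subset_left (by omega)
  have : s₁ ⊆ s₂ := he1 ▸ Finset.inter_subset_right
  exact hne (Finset.eq_of_subset_of_card_le this (by omega))

lemma nb_classify {x : Finset ℕ} (hxG : x ∈ G) (hxt : x ≠ t)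
    (hcard : (t ∩ x).card = 2) :
    (t ∩ x = {a, w} ∧ x = S.sa) ∨ (t ∩ x = {b, w} ∧ x = S.sb) := by
  rcases S.subt (Finset.inter_subset_left) hcard with h | h | h
  · exfalso
    have hex : e ⊆ x := h ▸ Finset.inter_subset_right
    exact hxt (S.uniqueG x hxG hex)
  · have hax : ({a, w} : Finset ℕ) ⊆ x := h ▸ Finset.inter_subset_right
    rcases S.sa_spec.2.2.2 x hxG hax with h' | h'
    · exact absurd h' hxt
    · exact Or.inl ⟨h, h'⟩
  · have hbx : ({b, w} : Finset ℕ) ⊆ x := h ▸ Finset.inter_subset_right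
    rcases S.sb_spec.2.2.2 x hxG hbx with h' | h'
    · exact absurd h' hxt
    · exact Or.inr ⟨h, h'⟩

lemma adjAt_t_sa : adjAt G w t S.sa ∧ adjAt G w t S.sb := by
  have hcard : ∀ s ∈ G, s ≠ t → ∀ f : Finset ℕ, f ⊆ t → f ⊆ s → f.card = 2 →
      (t ∩ s).card = 2 := by
    intro s hsG hst f hft hfs hfc
    have hsub : f ⊆ t ∩ s := Finset.subset_inter hft hfs
    have h1 : 2 ≤ (t ∩ s).card := hfc ▸ Finset.card_le_card hsub
    have h2 := inter_card_le_two S.tcard (S.surfG.card3 s hsG) (fun h => hst h.symm)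
    omega
  constructor
  · exact ⟨S.htG, S.sa_spec.1, S.wt, S.sa_spec.2.1 (by simp),
      hcard _ S.sa_spec.1 S.sa_spec.2.2.1 _ S.haw.1 S.sa_spec.2.1 S.haw.2.1⟩
  · exact ⟨S.htG, S.sb_spec.1, S.wt, S.sb_spec.2.1 (by simp),
      hcard _ S.sb_spec.1 S.sb_spec.2.2.1 _ S.hbw.1 S.sb_spec.2.1 S.hbw.2.1⟩

open Classical in
lemma link_deg {x : Finset ℕ} (hxF : x ∈ G.filter (fun s => w ∈ s)) :
    ((G.filter (fun s => w ∈ s)).filter (fun y => adjAt G w x y)).card = 2 := by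
  obtain ⟨hxG, hwx⟩ := Finset.mem_filter.1 hxF
  have hx3 : x.card = 3 := S.surfG.card3 x hxG
  have herase : (x.erase w).card = 2 := by
    rw [Finset.card_erase_of_mem hwx, hx3]
  obtain ⟨p, q, hpq, hpqe⟩ := Finset.card_eq_two.1 herase
  have hpx : p ∈ x := Finset.mem_of_mem_erase (hpqe ▸ Finset.mem_insert_self p {q})
  have hqx : q ∈ x := Finset.mem_of_mem_erase (by rw [hpqe]; simp)
  have hwp : w ≠ p := by
    rintro rfl
    exact (Finset.notMem_erase w x) (by rw [hpqe]; simp)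
  have hwq : w ≠ q := by
    rintro rfl
    exact (Finset.notMem_erase w x) (by rw [hpqe]; simp)
  have hxeq : x = {p, q, w} := by
    apply Finset.Subset.antisymm
    · intro z hz
      by_cases hzw : z = w
      · simp [hzw]
      · have : z ∈ x.erase w := Finset.mem_erase.2 ⟨hzw, hz⟩
        rw [hpqe] at this
        simp at this
        simp only [Finset.mem_insert, Finset.mem_singleton]
        tauto
    · intro z hz
      simp at hz
      rcases hz with rfl | rfl | rfl <;> assumption
  have hpw_sub : ({p, w} : Finset ℕ) ⊆ x := by
    intro z hz; simp at hz; rcases hz with rfl | rfl <;> assumption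
  have hqw_sub : ({q, w} : Finset ℕ) ⊆ x := by
    intro z hz; simp at hz; rcases hz with rfl | rfl <;> assumption
  have hpw_c : ({p, w} : Finset ℕ).card = 2 := by
    rw [Finset.card_insert_of_notMem (by simpa using fun h => hwp h.symm)]; rfl
  have hqw_c : ({q, w} : Finset ℕ).card = 2 := by
    rw [Finset.card_insert_of_notMem (by simpa using fun h => hwq h.symm)]; rfl
  have hpwE : ({p, w} : Finset ℕ) ∈ edges G := mem_edges.2 ⟨x, hxG, hpw_sub, hpw_c⟩
  have hqwE : ({q, w} : Finset ℕ) ∈ edges G := mem_edges.2 ⟨x, hxG, hqw_sub, hqw_c⟩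
  obtain ⟨sp, hspG, hspsub, hspx, hspu⟩ :=
    card_two_other (S.w_edge_two hpwE (by simp)).1 hxG hpw_sub
  obtain ⟨sq, hsqG, hsqsub, hsqx, hsqu⟩ :=
    card_two_other (S.w_edge_two hqwE (by simp)).1 hxG hqw_sub
  have hspq : sp ≠ sq := by
    intro h
    have h1 : x ⊆ sp := by
      rw [hxeq]
      intro z hz
      simp at hz
      rcases hz with rfl | rfl | rfl
      · exact hspsub (by simp)
      · rw [h]; exact hsqsub (by simp)
      · exact hspsub (by simp)
    have h2 : x = sp := Finset.eq_of_subset_of_card_le h1 (by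
      have := S.surfG.card3 sp hspG; omega)
    exact hspx h2.symm
  have hset : (G.filter (fun s => w ∈ s)).filter (fun y => adjAt G w x y) = {sp, sq} := by
    apply Finset.ext
    intro u
    simp only [Finset.mem_filter, Finset.mem_insert, Finset.mem_singleton]
    constructor
    · rintro ⟨⟨huG, hwu⟩, hadj⟩
      obtain ⟨-, -, -, -, hcard⟩ := hadj
      have hux : u ≠ x := by
        intro h
        rw [h, Finset.inter_self] at hcard
        omega
      have hwxu : w ∈ x ∩ u := Finset.mem_inter.2 ⟨hwx, hwu⟩
      have hsub' : x ∩ u ⊆ ({p, q, w} : Finset ℕ) := by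
        rw [← hxeq]; exact Finset.inter_subset_left
      rcases subsets_of_triangle hpq hwp hwq hsub' hcard with h | h | h
      · rw [h] at hwxu
        simp at hwxu
        rcases hwxu with h' | h'
        · exact absurd h' hwp
        · exact absurd h' hwq
      · have : ({p, w} : Finset ℕ) ⊆ u := h ▸ Finset.inter_subset_right
        rcases hspu u huG this with h' | h'
        · exact absurd h' hux
        · exact Or.inl h'
      · have : ({q, w} : Finset ℕ) ⊆ u := h ▸ Finset.inter_subset_right
        rcases hsqu u huG this with h' | h'
        · exact absurd h' hux
        · exact Or.inr h'
    · intro hu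
      have hkey : ∀ s', s' ∈ G → s' ≠ x → ({p, w} : Finset ℕ) ⊆ s' ∨ ({q, w} : Finset ℕ) ⊆ s' →
          (G.filter (fun s => w ∈ s)).Nonempty →
          x ∩ s' ⊇ ({p, w} : Finset ℕ) ∨ x ∩ s' ⊇ ({q, w} : Finset ℕ) := by
        intro s' hs'G hs'x hsub _
        rcases hsub with h | h
        · exact Or.inl (Finset.subset_inter hpw_sub h)
        · exact Or.inr (Finset.subset_inter hqw_sub h)
      rcases hu with rfl | rfl
      · refine ⟨⟨hspG, hspsub (by simp)⟩, hxG, hspG, hwx, hspsub (by simp), ?_⟩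
        have h1 : 2 ≤ (x ∩ u).card := by
          have : ({p, w} : Finset ℕ) ⊆ x ∩ u := Finset.subset_inter hpw_sub hspsub
          calc 2 = ({p, w} : Finset ℕ).card := hpw_c.symm
          _ ≤ _ := Finset.card_le_card this
        have h2 := inter_card_le_two hx3 (S.surfG.card3 _ hspG) (fun h => hspx h.symm)
        omega
      · refine ⟨⟨hsqG, hsqsub (by simp)⟩, hxG, hsqG, hwx, hsqsub (by simp), ?_⟩
        have h1 : 2 ≤ (x ∩ u).card := by
          have : ({q, w} : Finset ℕ) ⊆ x ∩ u := Finset.subset_inter hqw_sub hsqsub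
          calc 2 = ({q, w} : Finset ℕ).card := hqw_c.symm
          _ ≤ _ := Finset.card_le_card this
        have h2 := inter_card_le_two hx3 (S.surfG.card3 _ hsqG) (fun h => hsqx h.symm)
        omega
  rw [hset, Finset.card_insert_of_notMem (by simpa using hspq), Finset.card_singleton]

lemma link_w_conn :
    Relation.ReflTransGen (adjAt (G.erase t) w) S.sa S.sb := by
  have hmain := degree_two_erase_conn (G.filter (fun s => w ∈ s)) (adjAt G w)
    (fun x y h => ⟨h.2.1, h.1, h.2.2.2.1, h.2.2.1, by rw [Finset.inter_comm]; exact h.2.2.2.2⟩)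
    (fun x y h => ⟨Finset.mem_filter.2 ⟨h.1, h.2.2.1⟩, Finset.mem_filter.2 ⟨h.2.1, h.2.2.2.1⟩,
      fun heq => by
        have := h.2.2.2.2
        rw [heq, Finset.inter_self] at this
        have h3 := S.surfG.card3 y h.2.1
        omega⟩)
    (fun x hx => S.link_deg hx)
    t S.sa S.sb S.adjAt_t_sa.1 S.adjAt_t_sa.2 S.sa_ne_sb
  refine Relation.ReflTransGen.mono ?_ _ _ hmain
  rintro x y ⟨hadj, hxt, hyt⟩
  exact ⟨Finset.mem_erase.2 ⟨hxt, hadj.1⟩, Finset.mem_erase.2 ⟨hyt, hadj.2.1⟩,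
    hadj.2.2.1, hadj.2.2.2.1, hadj.2.2.2.2⟩

lemma surf_erase : IsSurface (G.erase t) := by
  have hsa : S.sa ∈ G.erase t := Finset.mem_erase.2 ⟨S.sa_spec.2.2.1, S.sa_spec.1⟩
  have hsb : S.sb ∈ G.erase t := Finset.mem_erase.2 ⟨S.sb_spec.2.2.1, S.sb_spec.1⟩
  constructor
  · exact ⟨S.sa, hsa⟩
  · exact fun s hs => S.surfG.card3 s (Finset.mem_of_mem_erase hs)
  · intro f hf
    have hfG : f ∈ edges G := edges_mono (Finset.erase_subset _ _) hf
    calc ((G.erase t).filter (fun s => f ⊆ s)).card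
        ≤ (G.filter (fun s => f ⊆ s)).card :=
          Finset.card_le_card (Finset.filter_subset_filter _ (Finset.erase_subset _ _))
      _ ≤ 2 := S.surfG.edge_le f hfG
  · intro v t₁ ht₁ t₂ ht₂ hv1 hv2
    obtain ⟨h1t, h1G⟩ := Finset.mem_erase.1 ht₁
    obtain ⟨h2t, h2G⟩ := Finset.mem_erase.1 ht₂
    have hsym : Symmetric (adjAt (G.erase t) v) := fun x y h =>
      ⟨h.2.1, h.1, h.2.2.2.1, h.2.2.1, by rw [Finset.inter_comm]; exact h.2.2.2.2⟩
    refine chain_reroute t ?_ ?_ (S.surfG.link_conn v t₁ h1G t₂ h2G hv1 hv2) h1t h2t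
    · rintro x y hadj hxt hyt
      exact ⟨Finset.mem_erase.2 ⟨hxt, hadj.1⟩, Finset.mem_erase.2 ⟨hyt, hadj.2.1⟩,
        hadj.2.2.1, hadj.2.2.2.1, hadj.2.2.2.2⟩
    · intro x y hxt hty hxnt hynt
      have hvt : v ∈ t := hxt.2.2.2.1
      have hvx : v ∈ x := hxt.2.2.1
      have hvy : v ∈ y := hty.2.2.2.1
      have hx := S.nb_classify hxt.1 hxnt (by rw [Finset.inter_comm]; exact hxt.2.2.2.2)
      have hy := S.nb_classify hty.2.1 hynt hty.2.2.2.2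
      have hvt' : v ∈ ({a, b, w} : Finset ℕ) := by rw [← S.htw]; exact hvt
      simp only [Finset.mem_insert, Finset.mem_singleton] at hvt'
      rcases hvt' with rfl | rfl | rfl
      · -- v = a : both neighbours are sa
        have hxa : x = S.sa := by
          rcases hx with ⟨-, h⟩ | ⟨h, -⟩
          · exact h
          · exfalso
            have : v ∈ t ∩ x := Finset.mem_inter.2 ⟨hvt, hvx⟩
            rw [h] at this
            simp at this
            rcases this with h' | h'
            · exact S.hab h'
            · exact S.hwa h'.symm
        have hya : y = S.sa := by
          rcases hy with ⟨-, h⟩ | ⟨h, -⟩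
          · exact h
          · exfalso
            have : v ∈ t ∩ y := Finset.mem_inter.2 ⟨hvt, hvy⟩
            rw [h] at this
            simp at this
            rcases this with h' | h'
            · exact S.hab h'
            · exact S.hwa h'.symm
        rw [hxa, hya]
      · have hxb : x = S.sb := by
          rcases hx with ⟨h, -⟩ | ⟨-, h⟩
          · exfalso
            have : v ∈ t ∩ x := Finset.mem_inter.2 ⟨hvt, hvx⟩
            rw [h] at this
            simp at this
            rcases this with h' | h'
            · exact S.hab h'.symm
            · exact S.hwb h'.symm
          · exact h
        have hyb : y = S.sb := by
          rcases hy with ⟨h, -⟩ | ⟨-, h⟩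
          · exfalso
            have : v ∈ t ∩ y := Finset.mem_inter.2 ⟨hvt, hvy⟩
            rw [h] at this
            simp at this
            rcases this with h' | h'
            · exact S.hab h'.symm
            · exact S.hwb h'.symm
          · exact h
        rw [hxb, hyb]
      · -- v = w : use the link circle
        have hpath := S.link_w_conn
        rcases hx.imp And.right And.right with rfl | rfl <;>
          rcases hy.imp And.right And.right with rfl | rfl
        · exact Relation.ReflTransGen.refl
        · exact hpath
        · exact (@Relation.ReflTransGen.stdSymm _ _ ⟨fun _ _ h => hsym h⟩).symm _ _ hpath
        · exact Relation.ReflTransGen.refl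
  · intro t₁ ht₁ t₂ ht₂
    obtain ⟨h1t, h1G⟩ := Finset.mem_erase.1 ht₁
    obtain ⟨h2t, h2G⟩ := Finset.mem_erase.1 ht₂
    have hsym : Symmetric (adj (G.erase t)) := fun x y h =>
      ⟨h.2.1, h.1, by rw [Finset.inter_comm]; exact h.2.2⟩
    refine chain_reroute t ?_ ?_ (S.surfG.conn t₁ h1G t₂ h2G) h1t h2t
    · rintro x y hadj hxt hyt
      exact ⟨Finset.mem_erase.2 ⟨hxt, hadj.1⟩, Finset.mem_erase.2 ⟨hyt, hadj.2.1⟩, hadj.2.2⟩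
    · intro x y hxt hty hxnt hynt
      have hx := S.nb_classify hxt.1 hxnt (by rw [Finset.inter_comm]; exact hxt.2.2)
      have hy := S.nb_classify hty.2.1 hynt hty.2.2
      have hpath : Relation.ReflTransGen (adj (G.erase t)) S.sa S.sb :=
        Relation.ReflTransGen.mono (fun u v h => ⟨h.1, h.2.1, h.2.2.2.2⟩) _ _ S.link_w_conn
      rcases hx.imp And.right And.right with rfl | rfl <;>
        rcases hy.imp And.right And.right with rfl | rfl
      · exact Relation.ReflTransGen.refl
      · exact hpath
      · exact (@Relation.ReflTransGen.stdSymm _ _ ⟨fun _ _ h => hsym h⟩).symm _ _ hpath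
      · exact Relation.ReflTransGen.refl

lemma card_inter_tt' : (t ∩ t').card = 2 := by
  have h1 : e ⊆ t ∩ t' := Finset.subset_inter S.het S.het'
  have h2 : 2 ≤ (t ∩ t').card := S.ecard ▸ Finset.card_le_card h1
  have h3 := inter_card_le_two S.tcard (S.discC.1.card3 t' S.ht'C) S.tne
  omega

lemma f_sub_t_of_edgesC {f : Finset ℕ} (hf : f ∈ edges C) (hft : f ⊆ t) : f = e := by
  obtain ⟨s, hsC, hfs, hfc⟩ := mem_edges.1 hf
  rcases S.subt hft hfc with h | h | h
  · exact h
  · exfalso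
    exact S.wC (mem_vertices.2 ⟨s, hsC, hfs (h ▸ (by simp : w ∈ ({a, w} : Finset ℕ)))⟩)
  · exfalso
    exact S.wC (mem_vertices.2 ⟨s, hsC, hfs (h ▸ (by simp : w ∈ ({b, w} : Finset ℕ)))⟩)

lemma e_filter_C : C.filter (fun s => e ⊆ s) = {t'} := by
  apply Finset.ext
  intro s
  simp only [Finset.mem_filter, Finset.mem_singleton]
  constructor
  · rintro ⟨hsC, hes⟩
    rcases S.uniqueK s (S.subC hsC) hes with rfl | h
    · exact absurd hsC S.tnot
    · exact h
  · rintro rfl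
    exact ⟨S.ht'C, S.het'⟩

lemma aw_filter_insert : (insert t C).filter (fun s => ({a, w} : Finset ℕ) ⊆ s) = {t} ∧
    (insert t C).filter (fun s => ({b, w} : Finset ℕ) ⊆ s) = {t} := by
  constructor <;>
  · apply Finset.ext
    intro s
    simp only [Finset.mem_filter, Finset.mem_singleton]
    constructor
    · rintro ⟨hs, hsub⟩
      rcases Finset.mem_insert.1 hs with rfl | hsC
      · rfl
      · exact absurd (mem_vertices.2 ⟨s, hsC, hsub (by simp)⟩) S.wC
    · rintro rfl
      exact ⟨Finset.mem_insert_self _ _, by first | exact S.haw.1 | exact S.hbw.1⟩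

lemma surf_insert : IsSurface (insert t C) := by
  have hlift : ∀ v, ∀ x y, adjAt C v x y → adjAt (insert t C) v x y := fun v x y h =>
    ⟨Finset.mem_insert_of_mem h.1, Finset.mem_insert_of_mem h.2.1, h.2.2.1,
      h.2.2.2.1, h.2.2.2.2⟩
  have hadj_tt' : ∀ v ∈ e, adjAt (insert t C) v t t' := fun v hv =>
    ⟨Finset.mem_insert_self _ _, Finset.mem_insert_of_mem S.ht'C, S.het hv, S.het' hv,
      S.card_inter_tt'⟩
  constructor
  · exact ⟨t, Finset.mem_insert_self _ _⟩
  · intro s hs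
    rcases Finset.mem_insert.1 hs with rfl | hsC
    · exact S.tcard
    · exact S.discC.1.card3 s hsC
  · intro f hf
    rw [S.edges_insert] at hf
    rcases Finset.mem_insert.1 hf with rfl | hf
    · rw [S.aw_filter_insert.1]; simp
    rcases Finset.mem_insert.1 hf with rfl | hf
    · rw [S.aw_filter_insert.2]; simp
    · rw [Finset.filter_insert]
      by_cases hft : f ⊆ t
      · have hfe : f = e := S.f_sub_t_of_edgesC hf hft
        subst hfe
        rw [if_pos hft, S.e_filter_C]
        exact le_trans (Finset.card_insert_le _ _) (by simp)
      · rw [if_neg hft]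
        exact S.discC.1.edge_le f hf
  · intro v t₁ ht₁ t₂ ht₂ hv1 hv2
    have hsymI : Symmetric (adjAt (insert t C) v) := fun x y h =>
      ⟨h.2.1, h.1, h.2.2.2.1, h.2.2.1, by rw [Finset.inter_comm]; exact h.2.2.2.2⟩
    have hkey : ∀ s ∈ C, v ∈ s → v ∈ t →
        Relation.ReflTransGen (adjAt (insert t C) v) t s := by
      intro s hsC hvs hvt
      have hve : v ∈ e := by
        have hvt' : v ∈ ({a, b, w} : Finset ℕ) := by rw [← S.htw]; exact hvt
        rw [S.hea]
        simp only [Finset.mem_insert, Finset.mem_singleton] at hvt' ⊢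
        rcases hvt' with rfl | rfl | rfl
        · exact Or.inl rfl
        · exact Or.inr rfl
        · exact absurd (mem_vertices.2 ⟨s, hsC, hvs⟩) S.wC
      have h1 : Relation.ReflTransGen (adjAt (insert t C) v) t' s :=
        Relation.ReflTransGen.mono (hlift v) _ _ (S.discC.1.link_conn v t' S.ht'C s hsC (S.het' hve) hvs)
      exact Relation.ReflTransGen.head (hadj_tt' v hve) h1
    rcases Finset.mem_insert.1 ht₁ with rfl | h1C <;> rcases Finset.mem_insert.1 ht₂ with rfl | h2C
    · exact Relation.ReflTransGen.refl
    · exact hkey t₂ h2C hv2 hv1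
    · exact (@Relation.ReflTransGen.stdSymm _ _ ⟨fun _ _ h => hsymI h⟩).symm _ _ (hkey t₁ h1C hv1 hv2)
    · exact Relation.ReflTransGen.mono (hlift v) _ _ (S.discC.1.link_conn v t₁ h1C t₂ h2C hv1 hv2)
  · intro t₁ ht₁ t₂ ht₂
    have hliftA : ∀ x y, adj C x y → adj (insert t C) x y := fun x y h =>
      ⟨Finset.mem_insert_of_mem h.1, Finset.mem_insert_of_mem h.2.1, h.2.2⟩
    have hsymI : Symmetric (adj (insert t C)) := fun x y h =>
      ⟨h.2.1, h.1, by rw [Finset.inter_comm]; exact h.2.2⟩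
    have hkey : ∀ s ∈ C, Relation.ReflTransGen (adj (insert t C)) t s := by
      intro s hsC
      have h1 : Relation.ReflTransGen (adj (insert t C)) t' s :=
        Relation.ReflTransGen.mono hliftA _ _ (S.discC.1.conn t' S.ht'C s hsC)
      exact Relation.ReflTransGen.head
        ⟨Finset.mem_insert_self _ _, Finset.mem_insert_of_mem S.ht'C, S.card_inter_tt'⟩ h1
    rcases Finset.mem_insert.1 ht₁ with rfl | h1C <;> rcases Finset.mem_insert.1 ht₂ with rfl | h2C
    · exact Relation.ReflTransGen.refl
    · exact hkey t₂ h2C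
    · exact (@Relation.ReflTransGen.stdSymm _ _ ⟨fun _ _ h => hsymI h⟩).symm _ _ (hkey t₁ h1C)
    · exact Relation.ReflTransGen.mono hliftA _ _ (S.discC.1.conn t₁ h1C t₂ h2C)

lemma aw_ne_bw : ({a, w} : Finset ℕ) ≠ ({b, w} : Finset ℕ) := by
  intro h
  have : a ∈ ({b, w} : Finset ℕ) := h ▸ (by simp : a ∈ ({a, w} : Finset ℕ))
  simp at this
  rcases this with h' | h'
  · exact S.hab h'
  · exact S.hwa h'.symm

lemma aw_ne_e : ({a, w} : Finset ℕ) ≠ e ∧ ({b, w} : Finset ℕ) ≠ e := by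
  constructor
  · intro h; exact S.we (h ▸ (by simp : w ∈ ({a, w} : Finset ℕ)))
  · intro h; exact S.we (h ▸ (by simp : w ∈ ({b, w} : Finset ℕ)))

lemma euler_insert : eulerChar (insert t C) = eulerChar C := by
  unfold eulerChar
  have h1 : (vertices (insert t C)).card = (vertices C).card + 1 := by
    rw [S.vertices_insert, Finset.card_insert_of_notMem S.wC]
  have h2 : (edges (insert t C)).card = (edges C).card + 2 := by
    rw [S.edges_insert, Finset.card_insert_of_notMem, Finset.card_insert_of_notMem
      S.aw_notin_edgesC.2]
    intro h
    rcases Finset.mem_insert.1 h with h' | h'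
    · exact S.aw_ne_bw h'
    · exact S.aw_notin_edgesC.1 h'
  have h3 : (insert t C).card = C.card + 1 := Finset.card_insert_of_notMem S.tnot
  rw [h1, h2, h3]
  push_cast
  ring

lemma aw_bdry_insert : ({a, w} : Finset ℕ) ∈ bdryEdges (insert t C) := by
  refine Finset.mem_filter.2 ⟨?_, ?_⟩
  · rw [S.edges_insert]; exact Finset.mem_insert_self _ _
  · rw [S.aw_filter_insert.1]; simp

lemma disc_insert : IsDisc (insert t C) :=
  ⟨S.surf_insert, S.euler_insert ▸ S.discC.2.1, ⟨{a, w}, S.aw_bdry_insert⟩⟩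

lemma awG : ({a, w} : Finset ℕ) ∈ edges G ∧ ({b, w} : Finset ℕ) ∈ edges G :=
  ⟨mem_edges.2 ⟨t, S.htG, S.haw.1, S.haw.2.1⟩, mem_edges.2 ⟨t, S.htG, S.hbw.1, S.hbw.2.1⟩⟩

lemma eZ : e ∈ edges G ∩ edges C := Finset.mem_inter.2 ⟨S.eG, S.eC⟩

lemma circZ : IsCircle (edges G ∩ edges C) := by
  rcases S.interGC.1 with h | h
  · exact h
  · exfalso
    have := S.eZ
    rw [h] at this
    simp at this

lemma wZ : ∀ f ∈ edges G ∩ edges C, w ∉ f := by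
  intro f hf hwf
  obtain ⟨s, hsC, hfs, -⟩ := mem_edges.1 (Finset.mem_inter.1 hf).2
  exact S.wC (mem_vertices.2 ⟨s, hsC, hfs hwf⟩)

lemma deg_a : ((edges G ∩ edges C).filter (fun g => a ∈ g)).card = 2 :=
  S.circZ.2.2.1 a (Finset.mem_biUnion.2 ⟨e, S.eZ, S.ae⟩)

lemma deg_b : ((edges G ∩ edges C).filter (fun g => b ∈ g)).card = 2 :=
  S.circZ.2.2.1 b (Finset.mem_biUnion.2 ⟨e, S.eZ, S.be⟩)

noncomputable def fa : Finset ℕ := (two_mem_other S.deg_a S.eZ S.ae).choose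

noncomputable def fb : Finset ℕ := (two_mem_other S.deg_b S.eZ S.be).choose

lemma fa_spec : S.fa ∈ edges G ∩ edges C ∧ a ∈ S.fa ∧ S.fa ≠ e ∧
    ∀ g ∈ edges G ∩ edges C, a ∈ g → g = e ∨ g = S.fa :=
  (two_mem_other S.deg_a S.eZ S.ae).choose_spec

lemma fb_spec : S.fb ∈ edges G ∩ edges C ∧ b ∈ S.fb ∧ S.fb ≠ e ∧
    ∀ g ∈ edges G ∩ edges C, b ∈ g → g = e ∨ g = S.fb :=
  (two_mem_other S.deg_b S.eZ S.be).choose_spec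

lemma inter_edges_new : edges (G.erase t) ∩ edges (insert t C) =
    insert {a, w} (insert {b, w} ((edges G ∩ edges C).erase e)) := by
  rw [S.edges_erase, S.edges_insert]
  apply Finset.ext
  intro f
  simp only [Finset.mem_inter, Finset.mem_erase, Finset.mem_insert]
  constructor
  · rintro ⟨⟨hfe, hfG⟩, rfl | rfl | hfC⟩
    · exact Or.inl rfl
    · exact Or.inr (Or.inl rfl)
    · exact Or.inr (Or.inr ⟨hfe, ⟨hfG, hfC⟩⟩)
  · rintro (rfl | rfl | ⟨hfe, hfG, hfC⟩)
    · exact ⟨⟨S.aw_ne_e.1, S.awG.1⟩, Or.inl rfl⟩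
    · exact ⟨⟨S.aw_ne_e.2, S.awG.2⟩, Or.inr (Or.inl rfl)⟩
    · exact ⟨⟨hfe, hfG⟩, Or.inr (Or.inr hfC)⟩

lemma circle_new : IsCircle (insert {a, w} (insert {b, w} ((edges G ∩ edges C).erase e))) := by
  set Z := edges G ∩ edges C with hZ
  set Z' := insert {a, w} (insert {b, w} (Z.erase e)) with hZ'
  have hawZ' : ({a, w} : Finset ℕ) ∈ Z' := Finset.mem_insert_self _ _
  have hbwZ' : ({b, w} : Finset ℕ) ∈ Z' := Finset.mem_insert_of_mem (Finset.mem_insert_self _ _)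
  have holdZ' : ∀ g ∈ Z.erase e, g ∈ Z' := fun g hg =>
    Finset.mem_insert_of_mem (Finset.mem_insert_of_mem hg)
  have hfaZ' : S.fa ∈ Z' := holdZ' _ (Finset.mem_erase.2 ⟨S.fa_spec.2.2.1, S.fa_spec.1⟩)
  have hfbZ' : S.fb ∈ Z' := holdZ' _ (Finset.mem_erase.2 ⟨S.fb_spec.2.2.1, S.fb_spec.1⟩)
  have hadj_ab : edgeAdj Z' {a, w} {b, w} := ⟨hawZ', hbwZ', ⟨w, by simp⟩⟩
  have hsymm : Symmetric (edgeAdj Z') := fun x y h =>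
    ⟨h.2.1, h.1, by rw [Finset.inter_comm]; exact h.2.2⟩
  have hwnot : ∀ g ∈ Z.erase e, w ∉ g := fun g hg => S.wZ g (Finset.mem_of_mem_erase hg)
  have hmemZ' : ∀ {g}, g ∈ Z' → g = {a, w} ∨ g = {b, w} ∨ g ∈ Z.erase e := by
    intro g hg
    rcases Finset.mem_insert.1 hg with h | h
    · exact Or.inl h
    rcases Finset.mem_insert.1 h with h' | h'
    · exact Or.inr (Or.inl h')
    · exact Or.inr (Or.inr h')
  refine ⟨⟨{a, w}, hawZ'⟩, ?_, ?_, ?_⟩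
  · -- all edges have card 2
    intro g hg
    rcases hmemZ' hg with rfl | rfl | h
    · exact S.haw.2.1
    · exact S.hbw.2.1
    · exact S.circZ.2.1 g (Finset.mem_of_mem_erase h)
  · -- degree 2
    intro v hv
    obtain ⟨g0, hg0, hvg0⟩ := Finset.mem_biUnion.1 hv
    by_cases hvw : v = w
    · rw [hvw]
      have : Z'.filter (fun g => w ∈ g) = {{a, w}, {b, w}} := by
        apply Finset.ext
        intro g
        simp only [Finset.mem_filter, Finset.mem_insert, Finset.mem_singleton]
        constructor
        · rintro ⟨hg, hwg⟩
          rcases hmemZ' hg with rfl | rfl | h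
          · exact Or.inl rfl
          · exact Or.inr rfl
          · exact absurd hwg (hwnot g h)
        · rintro (rfl | rfl)
          · exact ⟨hawZ', by simp⟩
          · exact ⟨hbwZ', by simp⟩
      rw [this, Finset.card_insert_of_notMem (by simpa using S.aw_ne_bw),
        Finset.card_singleton]
    by_cases hva : v = a
    · rw [hva]
      have : Z'.filter (fun g => a ∈ g) = {{a, w}, S.fa} := by
        apply Finset.ext
        intro g
        simp only [Finset.mem_filter, Finset.mem_insert, Finset.mem_singleton]
        constructor
        · rintro ⟨hg, hvg⟩
          rcases hmemZ' hg with rfl | rfl | h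
          · exact Or.inl rfl
          · exfalso
            simp at hvg
            rcases hvg with h' | h'
            · exact S.hab h'
            · exact S.hwa h'.symm
          · obtain ⟨hge, hgZ⟩ := Finset.mem_erase.1 h
            rcases S.fa_spec.2.2.2 g hgZ hvg with h' | h'
            · exact absurd h' hge
            · exact Or.inr h'
        · rintro (rfl | rfl)
          · exact ⟨hawZ', by simp⟩
          · exact ⟨hfaZ', S.fa_spec.2.1⟩
      rw [this, Finset.card_insert_of_notMem, Finset.card_singleton]
      intro h
      rw [Finset.mem_singleton] at h
      exact S.wZ S.fa S.fa_spec.1 (h ▸ (by simp : w ∈ ({a, w} : Finset ℕ)))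
    by_cases hvb : v = b
    · rw [hvb]
      have : Z'.filter (fun g => b ∈ g) = {{b, w}, S.fb} := by
        apply Finset.ext
        intro g
        simp only [Finset.mem_filter, Finset.mem_insert, Finset.mem_singleton]
        constructor
        · rintro ⟨hg, hvg⟩
          rcases hmemZ' hg with rfl | rfl | h
          · exfalso
            simp at hvg
            rcases hvg with h' | h'
            · exact S.hab h'.symm
            · exact S.hwb h'.symm
          · exact Or.inl rfl
          · obtain ⟨hge, hgZ⟩ := Finset.mem_erase.1 h
            rcases S.fb_spec.2.2.2 g hgZ hvg with h' | h'
            · exact absurd h' hge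
            · exact Or.inr h'
        · rintro (rfl | rfl)
          · exact ⟨hbwZ', by simp⟩
          · exact ⟨hfbZ', S.fb_spec.2.1⟩
      rw [this, Finset.card_insert_of_notMem, Finset.card_singleton]
      intro h
      rw [Finset.mem_singleton] at h
      exact S.wZ S.fb S.fb_spec.1 (h ▸ (by simp : w ∈ ({b, w} : Finset ℕ)))
    · -- generic vertex
      have hg0Z : g0 ∈ Z.erase e := by
        rcases hmemZ' hg0 with rfl | rfl | h
        · exfalso
          simp at hvg0
          rcases hvg0 with h' | h'
          · exact hva h'
          · exact hvw h'
        · exfalso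
          simp at hvg0
          rcases hvg0 with h' | h'
          · exact hvb h'
          · exact hvw h'
        · exact h
      have heq : Z'.filter (fun g => v ∈ g) = Z.filter (fun g => v ∈ g) := by
        apply Finset.ext
        intro g
        simp only [Finset.mem_filter]
        constructor
        · rintro ⟨hg, hvg⟩
          rcases hmemZ' hg with rfl | rfl | h
          · exfalso
            simp at hvg
            rcases hvg with h' | h'
            · exact hva h'
            · exact hvw h'
          · exfalso
            simp at hvg
            rcases hvg with h' | h'
            · exact hvb h'
            · exact hvw h'
          · exact ⟨Finset.mem_of_mem_erase h, hvg⟩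
        · rintro ⟨hg, hvg⟩
          refine ⟨holdZ' g (Finset.mem_erase.2 ⟨?_, hg⟩), hvg⟩
          rintro rfl
          rw [S.hea] at hvg
          simp at hvg
          rcases hvg with h' | h'
          · exact hva h'
          · exact hvb h'
      rw [heq]
      exact S.circZ.2.2.1 v (Finset.mem_biUnion.2
        ⟨g0, Finset.mem_of_mem_erase hg0Z, hvg0⟩)
  · -- connectivity
    have hreach_adj : ∀ x ∈ Z', (x ∩ e).Nonempty →
        Relation.ReflTransGen (edgeAdj Z') x {a, w} := by
      intro x hx ⟨v, hv⟩
      have hvx : v ∈ x := (Finset.mem_inter.1 hv).1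
      have hve : v ∈ e := (Finset.mem_inter.1 hv).2
      rw [S.hea] at hve
      simp at hve
      rcases hve with h' | h'
      · exact Relation.ReflTransGen.single
          ⟨hx, hawZ', ⟨v, Finset.mem_inter.2 ⟨hvx, by simp [h']⟩⟩⟩
      · exact (Relation.ReflTransGen.single
          ⟨hx, hbwZ', ⟨v, Finset.mem_inter.2 ⟨hvx, by simp [h']⟩⟩⟩).tail
          (hsymm hadj_ab)
    have hreach : ∀ x ∈ Z', Relation.ReflTransGen (edgeAdj Z') x {a, w} := by
      intro x hx
      rcases hmemZ' hx with rfl | rfl | h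
      · exact Relation.ReflTransGen.refl
      · exact Relation.ReflTransGen.single (hsymm hadj_ab)
      · obtain ⟨hxe, hxZ⟩ := Finset.mem_erase.1 h
        have hold : Relation.ReflTransGen (edgeAdj Z) x e :=
          S.circZ.2.2.2 x hxZ e S.eZ
        have hkey := chain_key (R := edgeAdj Z) (R' := edgeAdj Z') e
          (fun u v h hu hv => ⟨holdZ' u (Finset.mem_erase.2 ⟨hu, h.1⟩),
            holdZ' v (Finset.mem_erase.2 ⟨hv, h.2.1⟩), h.2.2⟩)
          (fun u v hu hv hune hvne => by
            have h1 : Relation.ReflTransGen (edgeAdj Z') u {a, w} :=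
              hreach_adj u (holdZ' u (Finset.mem_erase.2 ⟨hune, hu.1⟩)) hu.2.2
            have h2 : Relation.ReflTransGen (edgeAdj Z') v {a, w} :=
              hreach_adj v (holdZ' v (Finset.mem_erase.2 ⟨hvne, hv.2.1⟩))
                (by rw [Finset.inter_comm]; exact hv.2.2)
            exact h1.trans ((@Relation.ReflTransGen.stdSymm _ _ ⟨fun _ _ h => hsymm h⟩).symm _ _ h2))
          hxe
        -- from x ↝ e in Z, get x ↝ fa in Z', then fa adj {a,w}
        have hfa_adj : edgeAdj Z e S.fa :=
          ⟨S.eZ, S.fa_spec.1, ⟨a, Finset.mem_inter.2 ⟨S.ae, S.fa_spec.2.1⟩⟩⟩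
        have hxfa : Relation.ReflTransGen (edgeAdj Z') x S.fa :=
          (hkey e hold).1 rfl S.fa hfa_adj S.fa_spec.2.2.1
        exact hxfa.tail ⟨hfaZ', hawZ', ⟨a, Finset.mem_inter.2 ⟨S.fa_spec.2.1, by simp⟩⟩⟩
    intro e₁ he₁ e₂ he₂
    exact (hreach e₁ he₁).trans ((@Relation.ReflTransGen.stdSymm _ _ ⟨fun _ _ h => hsymm h⟩).symm _ _ (hreach e₂ he₂))

lemma inter_vertices_new : vertices (G.erase t) ∩ vertices (insert t C) =
    (insert {a, w} (insert {b, w} ((edges G ∩ edges C).erase e))).biUnion id := by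
  rw [S.vertices_erase, S.vertices_insert]
  apply Finset.ext
  intro v
  simp only [Finset.mem_inter, Finset.mem_insert, Finset.mem_biUnion, id]
  constructor
  · rintro ⟨hvG, hvw | hvC⟩
    · exact ⟨{a, w}, Or.inl rfl, by simp [hvw]⟩
    · have : v ∈ vertices G ∩ vertices C := Finset.mem_inter.2 ⟨hvG, hvC⟩
      rw [S.interGC.2] at this
      obtain ⟨g, hg, hvg⟩ := Finset.mem_biUnion.1 this
      by_cases hge : g = e
      · subst hge
        rw [S.hea] at hvg
        simp at hvg
        rcases hvg with h' | h'
        · exact ⟨{a, w}, Or.inl rfl, by simp [h']⟩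
        · exact ⟨{b, w}, Or.inr (Or.inl rfl), by simp [h']⟩
      · exact ⟨g, Or.inr (Or.inr (Finset.mem_erase.2 ⟨hge, hg⟩)), hvg⟩
  · rintro ⟨g, rfl | rfl | hg, hvg⟩
    · simp at hvg
      rcases hvg with h' | h'
      · rw [h']
        exact ⟨mem_vertices.2 ⟨t, S.htG, S.at_⟩,
          Or.inr (mem_vertices.2 ⟨t', S.ht'C, S.het' S.ae⟩)⟩
      · exact ⟨by rw [h']; exact S.wG, Or.inl h'⟩
    · simp at hvg
      rcases hvg with h' | h'
      · rw [h']
        exact ⟨mem_vertices.2 ⟨t, S.htG, S.bt⟩,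
          Or.inr (mem_vertices.2 ⟨t', S.ht'C, S.het' S.be⟩)⟩
      · exact ⟨by rw [h']; exact S.wG, Or.inl h'⟩
    · have : v ∈ vertices G ∩ vertices C := by
        rw [S.interGC.2]
        exact Finset.mem_biUnion.2 ⟨g, Finset.mem_of_mem_erase hg, hvg⟩
      exact ⟨(Finset.mem_inter.1 this).1, Or.inr (Finset.mem_inter.1 this).2⟩

lemma circleInter_new : CircleInter (G.erase t) (insert t C) := by
  constructor
  · rw [S.inter_edges_new]
    exact Or.inl S.circle_new
  · rw [S.inter_edges_new]
    exact S.inter_vertices_new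

lemma e_bdry_C : e ∈ bdryEdges C :=
  Finset.mem_filter.2 ⟨S.eC, by rw [S.e_filter_C]; simp⟩

lemma bdry_insert_sub :
    bdryEdges (insert t C) ⊆ insert {a, w} (insert {b, w} (bdryEdges C)) := by
  intro f hf
  obtain ⟨hfE, hc1⟩ := Finset.mem_filter.1 hf
  rw [S.edges_insert] at hfE
  rcases Finset.mem_insert.1 hfE with rfl | hfE
  · exact Finset.mem_insert_self _ _
  rcases Finset.mem_insert.1 hfE with rfl | hfE
  · exact Finset.mem_insert_of_mem (Finset.mem_insert_self _ _)
  · refine Finset.mem_insert_of_mem (Finset.mem_insert_of_mem (Finset.mem_filter.2 ⟨hfE, ?_⟩))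
    obtain ⟨s, hsC, hfs, -⟩ := mem_edges.1 hfE
    have h1 : 1 ≤ (C.filter (fun s => f ⊆ s)).card :=
      Finset.card_pos.2 ⟨s, Finset.mem_filter.2 ⟨hsC, hfs⟩⟩
    have h2 : (C.filter (fun s => f ⊆ s)).card ≤ ((insert t C).filter (fun s => f ⊆ s)).card :=
      Finset.card_le_card (Finset.filter_subset_filter _ (Finset.subset_insert _ _))
    omega

lemma bdryV_insert_sub : bdryVertices (insert t C) ⊆ insert w (bdryVertices C) := by
  intro v hv
  obtain ⟨f, hf, hvf⟩ := Finset.mem_biUnion.1 hv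
  have habv : a ∈ bdryVertices C := Finset.mem_biUnion.2 ⟨e, S.e_bdry_C, S.ae⟩
  have hbbv : b ∈ bdryVertices C := Finset.mem_biUnion.2 ⟨e, S.e_bdry_C, S.be⟩
  rcases Finset.mem_insert.1 (S.bdry_insert_sub hf) with rfl | hf'
  · simp at hvf
    rcases hvf with rfl | rfl
    · exact Finset.mem_insert_of_mem habv
    · exact Finset.mem_insert_self _ _
  rcases Finset.mem_insert.1 hf' with rfl | hf'
  · simp at hvf
    rcases hvf with rfl | rfl
    · exact Finset.mem_insert_of_mem hbbv
    · exact Finset.mem_insert_self _ _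
  · exact Finset.mem_insert_of_mem (Finset.mem_biUnion.2 ⟨f, hf', hvf⟩)

lemma intV_sub : intVertices C ⊆ intVertices (insert t C) := by
  intro v hv
  obtain ⟨hvV, hvB⟩ := Finset.mem_sdiff.1 hv
  refine Finset.mem_sdiff.2 ⟨?_, ?_⟩
  · rw [S.vertices_insert]; exact Finset.mem_insert_of_mem hvV
  · intro h
    rcases Finset.mem_insert.1 (S.bdryV_insert_sub h) with rfl | h'
    · exact S.wC hvV
    · exact hvB h'

lemma e_notin_edges_other {B : Complex} (hBK : B ⊆ K) (hBG : Disjoint B G)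
    (hBC : Disjoint B C) : e ∉ edges B := by
  intro h
  obtain ⟨s, hsB, hes, -⟩ := mem_edges.1 h
  rcases S.uniqueK s (hBK hsB) hes with rfl | rfl
  · exact Finset.disjoint_left.1 hBG hsB S.htG
  · exact Finset.disjoint_left.1 hBC hsB S.ht'C

lemma aw_notin_edges_other {B : Complex} (hBK : B ⊆ K) (hBG : Disjoint B G) :
    ({a, w} : Finset ℕ) ∉ edges B ∧ ({b, w} : Finset ℕ) ∉ edges B := by
  constructor
  · intro h
    obtain ⟨s, hsB, hsub, -⟩ := mem_edges.1 h
    exact Finset.disjoint_left.1 hBG hsB ((S.w_edge_two S.awG.1 (by simp)).2 s (hBK hsB) hsub)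
  · intro h
    obtain ⟨s, hsB, hsub, -⟩ := mem_edges.1 h
    exact Finset.disjoint_left.1 hBG hsB ((S.w_edge_two S.awG.2 (by simp)).2 s (hBK hsB) hsub)

lemma inter_edges_erase_other {B : Complex} (he : e ∉ edges B) :
    edges (G.erase t) ∩ edges B = edges G ∩ edges B := by
  rw [S.edges_erase]
  apply Finset.ext
  intro f
  simp only [Finset.mem_inter, Finset.mem_erase]
  constructor
  · rintro ⟨⟨-, h1⟩, h2⟩
    exact ⟨h1, h2⟩
  · rintro ⟨h1, h2⟩
    exact ⟨⟨fun hfe => he (hfe ▸ h2), h1⟩, h2⟩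

lemma inter_edges_insert_other {B : Complex} (hBK : B ⊆ K) (hBG : Disjoint B G) :
    edges (insert t C) ∩ edges B = edges C ∩ edges B := by
  rw [S.edges_insert]
  apply Finset.ext
  intro f
  simp only [Finset.mem_inter, Finset.mem_insert]
  constructor
  · rintro ⟨rfl | rfl | h1, h2⟩
    · exact absurd h2 (S.aw_notin_edges_other hBK hBG).1
    · exact absurd h2 (S.aw_notin_edges_other hBK hBG).2
    · exact ⟨h1, h2⟩
  · rintro ⟨h1, h2⟩
    exact ⟨Or.inr (Or.inr h1), h2⟩

lemma inter_vertices_insert_other {B : Complex} (hw : w ∉ vertices B) :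
    vertices (insert t C) ∩ vertices B = vertices C ∩ vertices B := by
  rw [S.vertices_insert]
  apply Finset.ext
  intro v
  simp only [Finset.mem_inter, Finset.mem_insert]
  constructor
  · rintro ⟨rfl | h1, h2⟩
    · exact absurd h2 hw
    · exact ⟨h1, h2⟩
  · rintro ⟨h1, h2⟩
    exact ⟨Or.inr h1, h2⟩

end Setup

lemma circleInter_congr {A B A' B' : Complex} (h : CircleInter A B)
    (he : edges A' ∩ edges B' = edges A ∩ edges B)
    (hv : vertices A' ∩ vertices B' = vertices A ∩ vertices B) : CircleInter A' B' := by
  unfold CircleInter at h ⊢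
  rw [he, hv]
  exact h

lemma circleInter_comm {A B : Complex} (h : CircleInter A B) : CircleInter B A := by
  unfold CircleInter at h ⊢
  rw [Finset.inter_comm (edges B), Finset.inter_comm (vertices B)]
  exact h



/-- in a minimal decomposition, the link of every boundary edge
of the genus-surface lies in the boundary of the genus-surface. -/
theorem link_of_boundary_edge_in_boundary (K G D : Complex)
    (Ds : Finset Complex) (h : IsMinDecomp K G D Ds)
    (e : Finset ℕ) (he : e ∈ bdryEdges G) :
    ∀ t ∈ G, e ⊆ t → ∀ w ∈ t, w ∉ e → w ∈ bdryVertices G := by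
  intro t ht het w hwt hwe
  by_contra hw
  obtain ⟨hdec, hmin⟩ := h
  have hKclosed := hdec.closed
  have hsurfG := hdec.surfG
  have he_card : e.card = 2 := by
    obtain ⟨s, hs, hsub, hc⟩ := mem_edges.1 (Finset.mem_filter.1 he).1
    exact hc
  obtain ⟨x, y, hxy, hexy⟩ := Finset.card_eq_two.1 he_card
  have hwx : w ≠ x := fun hh => hwe (by rw [hexy]; simp [hh])
  have hwy : w ≠ y := fun hh => hwe (by rw [hexy]; simp [hh])
  have htc : t.card = 3 := hsurfG.card3 t ht
  have hsub : ({x, y, w} : Finset ℕ) ⊆ t := by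
    intro z hz
    simp at hz
    rcases hz with rfl | rfl | rfl
    · exact het (by rw [hexy]; simp)
    · exact het (by rw [hexy]; simp)
    · exact hwt
  have hxw : x ≠ w := fun hh => hwx hh.symm
  have hyw : y ≠ w := fun hh => hwy hh.symm
  have hcard3 : ({x, y, w} : Finset ℕ).card = 3 := by
    rw [Finset.card_insert_of_notMem (by simp [hxy, hxw]),
      Finset.card_insert_of_notMem (by simp [hyw]), Finset.card_singleton]
  have htw : t = {x, y, w} := (Finset.eq_of_subset_of_card_le hsub (by omega)).symm
  obtain ⟨t2, ht2K, het2, ht2t, -⟩ := two_triangles hKclosed (hdec.subG ht) het he_card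
  have ht2G : t2 ∉ G := fun hh => ht2t (bdry_unique he ht het t2 hh het2)
  have hcover := hdec.cover
  have ht2mem : t2 ∈ D ∨ ∃ Di ∈ Ds, t2 ∈ Di := by
    have h0 : t2 ∈ G ∪ D ∪ Ds.sup id := by rw [hcover]; exact ht2K
    rcases Finset.mem_union.1 h0 with h1 | h1
    · rcases Finset.mem_union.1 h1 with h2 | h2
      · exact absurd h2 ht2G
      · exact Or.inl h2
    · exact Or.inr (Finset.mem_sup.1 h1)
  have hGpos : 0 < G.card := Finset.card_pos.2 hsurfG.nonempty
  have hGerase : (G.erase t).card = G.card - 1 := Finset.card_erase_of_mem ht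
  rcases ht2mem with ht2D | ⟨Di, hDi, ht2Di⟩
  · -- Case A : the other triangle lies in D
    have S : Setup K G D e t t2 x y w :=
      ⟨hKclosed, hsurfG, hdec.subG, hdec.subD, hdec.discD, hdec.disjGD, hdec.interGD,
        ht, ht2D, he, hexy, hxy, htw, hwx, hwy, het2, hw⟩
    have hunion : (G.erase t) ∪ insert t D = G ∪ D := by
      apply Finset.ext
      intro s
      simp only [Finset.mem_union, Finset.mem_erase, Finset.mem_insert]
      constructor
      · rintro (⟨-, hs⟩ | rfl | hs)
        · exact Or.inl hs
        · exact Or.inl ht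
        · exact Or.inr hs
      · rintro (hs | hs)
        · by_cases hst : s = t
          · exact Or.inr (Or.inl hst)
          · exact Or.inl ⟨hst, hs⟩
        · exact Or.inr (Or.inr hs)
    have hdec' : IsDecomp K (G.erase t) (insert t D) Ds :=
      { closed := hdec.closed
        subG := (Finset.erase_subset _ _).trans hdec.subG
        subD := Finset.insert_subset_iff.2 ⟨hdec.subG ht, hdec.subD⟩
        subDs := hdec.subDs
        surfG := S.surf_erase
        discD := S.disc_insert
        discDs := hdec.discDs
        maxv := by
          obtain ⟨v, hv, hval⟩ := hdec.maxv
          exact ⟨v, S.intV_sub hv, hval⟩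
        cover := by rw [hunion, hcover]
        disjGD := by
          rw [Finset.disjoint_left]
          intro s hs hins
          obtain ⟨hst, hsG⟩ := Finset.mem_erase.1 hs
          rcases Finset.mem_insert.1 hins with rfl | hsD
          · exact hst rfl
          · exact Finset.disjoint_left.1 hdec.disjGD hsG hsD
        disjGDs := fun Dj hDj =>
          Finset.disjoint_of_subset_left (Finset.erase_subset _ _) (hdec.disjGDs Dj hDj)
        disjDDs := fun Dj hDj => by
          rw [Finset.disjoint_left]
          intro s hs hsDj
          rcases Finset.mem_insert.1 hs with rfl | hsD
          · exact Finset.disjoint_left.1 (hdec.disjGDs Dj hDj) ht hsDj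
          · exact Finset.disjoint_left.1 (hdec.disjDDs Dj hDj) hsD hsDj
        disjDsDs := hdec.disjDsDs
        interGD := S.circleInter_new
        interGDs := fun Dj hDj =>
          circleInter_congr (hdec.interGDs Dj hDj)
            (S.inter_edges_erase_other (S.e_notin_edges_other (hdec.subDs Dj hDj)
              (hdec.disjGDs Dj hDj).symm (hdec.disjDDs Dj hDj).symm))
            (by rw [S.vertices_erase])
        interDDs := fun Dj hDj =>
          circleInter_congr (hdec.interDDs Dj hDj)
            (S.inter_edges_insert_other (hdec.subDs Dj hDj) (hdec.disjGDs Dj hDj).symm)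
            (S.inter_vertices_insert_other
              (S.w_notin_shared (hdec.subDs Dj hDj) (hdec.disjGDs Dj hDj)
                (hdec.interGDs Dj hDj)))
        interDsDs := hdec.interDsDs }
    have hle := hmin _ _ _ hdec'
    omega
  · -- Case B : the other triangle lies in some disc Di
    have S : Setup K G Di e t t2 x y w :=
      ⟨hKclosed, hsurfG, hdec.subG, hdec.subDs Di hDi, hdec.discDs Di hDi,
        hdec.disjGDs Di hDi, hdec.interGDs Di hDi, ht, ht2Di, he, hexy, hxy, htw,
        hwx, hwy, het2, hw⟩
    have hwD : w ∉ vertices D := S.w_notin_shared hdec.subD hdec.disjGD hdec.interGD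
    have hcov' : (G.erase t) ∪ D ∪ (insert (insert t Di) (Ds.erase Di)).sup id = K := by
      apply Finset.Subset.antisymm
      · intro s hs
        rw [← hcover]
        rcases Finset.mem_union.1 hs with hs1 | hs1
        · rcases Finset.mem_union.1 hs1 with hs2 | hs2
          · exact Finset.mem_union_left _ (Finset.mem_union_left _
              (Finset.mem_of_mem_erase hs2))
          · exact Finset.mem_union_left _ (Finset.mem_union_right _ hs2)
        · obtain ⟨Dj, hDj, hsDj⟩ := Finset.mem_sup.1 hs1
          rcases Finset.mem_insert.1 hDj with rfl | hDj'
          · rcases Finset.mem_insert.1 hsDj with rfl | hsDi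
            · exact Finset.mem_union_left _ (Finset.mem_union_left _ ht)
            · exact Finset.mem_union_right _ (Finset.mem_sup.2 ⟨Di, hDi, hsDi⟩)
          · exact Finset.mem_union_right _
              (Finset.mem_sup.2 ⟨Dj, Finset.mem_of_mem_erase hDj', hsDj⟩)
      · intro s hs
        rw [← hcover] at hs
        rcases Finset.mem_union.1 hs with hs1 | hs1
        · rcases Finset.mem_union.1 hs1 with hs2 | hs2
          · by_cases hst : s = t
            · subst hst
              exact Finset.mem_union_right _ (Finset.mem_sup.2
                ⟨insert s Di, Finset.mem_insert_self _ _, Finset.mem_insert_self _ _⟩)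
            · exact Finset.mem_union_left _ (Finset.mem_union_left _
                (Finset.mem_erase.2 ⟨hst, hs2⟩))
          · exact Finset.mem_union_left _ (Finset.mem_union_right _ hs2)
        · obtain ⟨Dj, hDj, hsDj⟩ := Finset.mem_sup.1 hs1
          by_cases hDjDi : Dj = Di
          · subst hDjDi
            exact Finset.mem_union_right _ (Finset.mem_sup.2
              ⟨insert t Dj, Finset.mem_insert_self _ _, Finset.mem_insert_of_mem hsDj⟩)
          · exact Finset.mem_union_right _ (Finset.mem_sup.2
              ⟨Dj, Finset.mem_insert_of_mem (Finset.mem_erase.2 ⟨hDjDi, hDj⟩), hsDj⟩)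
    have hdec' : IsDecomp K (G.erase t) D (insert (insert t Di) (Ds.erase Di)) :=
      { closed := hdec.closed
        subG := (Finset.erase_subset _ _).trans hdec.subG
        subD := hdec.subD
        subDs := fun Dj hDj => by
          rcases Finset.mem_insert.1 hDj with rfl | hDj'
          · exact Finset.insert_subset_iff.2 ⟨hdec.subG ht, hdec.subDs Di hDi⟩
          · exact hdec.subDs Dj (Finset.mem_of_mem_erase hDj')
        surfG := S.surf_erase
        discD := hdec.discD
        discDs := fun Dj hDj => by
          rcases Finset.mem_insert.1 hDj with rfl | hDj'
          · exact S.disc_insert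
          · exact hdec.discDs Dj (Finset.mem_of_mem_erase hDj')
        maxv := hdec.maxv
        cover := hcov'
        disjGD := Finset.disjoint_of_subset_left (Finset.erase_subset _ _) hdec.disjGD
        disjGDs := fun Dj hDj => by
          rcases Finset.mem_insert.1 hDj with rfl | hDj'
          · rw [Finset.disjoint_left]
            intro s hs hins
            obtain ⟨hst, hsG⟩ := Finset.mem_erase.1 hs
            rcases Finset.mem_insert.1 hins with rfl | hsDi
            · exact hst rfl
            · exact Finset.disjoint_left.1 (hdec.disjGDs Di hDi) hsG hsDi
          · exact Finset.disjoint_of_subset_left (Finset.erase_subset _ _)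
              (hdec.disjGDs Dj (Finset.mem_of_mem_erase hDj'))
        disjDDs := fun Dj hDj => by
          rcases Finset.mem_insert.1 hDj with rfl | hDj'
          · rw [Finset.disjoint_left]
            intro s hs hins
            rcases Finset.mem_insert.1 hins with rfl | hsDi
            · exact Finset.disjoint_left.1 hdec.disjGD ht hs
            · exact Finset.disjoint_left.1 (hdec.disjDDs Di hDi) hs hsDi
          · exact hdec.disjDDs Dj (Finset.mem_of_mem_erase hDj')
        disjDsDs := fun Dj hDj Dk hDk hne => by
          rcases Finset.mem_insert.1 hDj with rfl | hDj' <;>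
            rcases Finset.mem_insert.1 hDk with h | hDk'
          · exact absurd h.symm hne
          · obtain ⟨hkDi, hkDs⟩ := Finset.mem_erase.1 hDk'
            rw [Finset.disjoint_left]
            intro s hs hsk
            rcases Finset.mem_insert.1 hs with rfl | hsDi
            · exact Finset.disjoint_left.1 (hdec.disjGDs Dk hkDs) ht hsk
            · exact Finset.disjoint_left.1
                (hdec.disjDsDs Di hDi Dk hkDs (fun hh => hkDi hh.symm)) hsDi hsk
          · subst h
            obtain ⟨hjDi, hjDs⟩ := Finset.mem_erase.1 hDj'
            rw [Finset.disjoint_left]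
            intro s hs hsk
            rcases Finset.mem_insert.1 hsk with h' | hsDi
            · subst h'
              exact Finset.disjoint_left.1 (hdec.disjGDs Dj hjDs) ht hs
            · exact Finset.disjoint_left.1
                (hdec.disjDsDs Dj hjDs Di hDi hjDi) hs hsDi
          · exact hdec.disjDsDs Dj (Finset.mem_of_mem_erase hDj')
              Dk (Finset.mem_of_mem_erase hDk') hne
        interGD :=
          circleInter_congr hdec.interGD
            (S.inter_edges_erase_other (S.e_notin_edges_other hdec.subD
              hdec.disjGD.symm (hdec.disjDDs Di hDi)))
            (by rw [S.vertices_erase])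
        interGDs := fun Dj hDj => by
          rcases Finset.mem_insert.1 hDj with rfl | hDj'
          · exact S.circleInter_new
          · obtain ⟨hjDi, hjDs⟩ := Finset.mem_erase.1 hDj'
            exact circleInter_congr (hdec.interGDs Dj hjDs)
              (S.inter_edges_erase_other (S.e_notin_edges_other (hdec.subDs Dj hjDs)
                (hdec.disjGDs Dj hjDs).symm
                ((hdec.disjDsDs Di hDi Dj hjDs (fun hh => hjDi hh.symm)).symm)))
              (by rw [S.vertices_erase])
        interDDs := fun Dj hDj => by
          rcases Finset.mem_insert.1 hDj with rfl | hDj'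
          · exact circleInter_comm (circleInter_congr
              (circleInter_comm (hdec.interDDs Di hDi))
              (S.inter_edges_insert_other hdec.subD hdec.disjGD.symm)
              (S.inter_vertices_insert_other hwD))
          · exact hdec.interDDs Dj (Finset.mem_of_mem_erase hDj')
        interDsDs := fun Dj hDj Dk hDk hne => by
          rcases Finset.mem_insert.1 hDj with rfl | hDj' <;>
            rcases Finset.mem_insert.1 hDk with h | hDk'
          · exact absurd h.symm hne
          · obtain ⟨hkDi, hkDs⟩ := Finset.mem_erase.1 hDk'
            exact circleInter_congr
              (hdec.interDsDs Di hDi Dk hkDs (fun hh => hkDi hh.symm))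
              (S.inter_edges_insert_other (hdec.subDs Dk hkDs)
                (hdec.disjGDs Dk hkDs).symm)
              (S.inter_vertices_insert_other
                (S.w_notin_shared (hdec.subDs Dk hkDs) (hdec.disjGDs Dk hkDs)
                  (hdec.interGDs Dk hkDs)))
          · subst h
            obtain ⟨hjDi, hjDs⟩ := Finset.mem_erase.1 hDj'
            exact circleInter_comm (circleInter_congr
              (hdec.interDsDs Di hDi Dj hjDs (fun hh => hjDi hh.symm))
              (S.inter_edges_insert_other (hdec.subDs Dj hjDs)
                (hdec.disjGDs Dj hjDs).symm)
              (S.inter_vertices_insert_other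
                (S.w_notin_shared (hdec.subDs Dj hjDs) (hdec.disjGDs Dj hjDs)
                  (hdec.interGDs Dj hjDs))))
          · exact hdec.interDsDs Dj (Finset.mem_of_mem_erase hDj')
              Dk (Finset.mem_of_mem_erase hDk') hne }
    have hle := hmin _ _ _ hdec'
    omega

end Tri
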